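/- arXiv:1812.05081 — 2 statements merged into one kernel-verified Lean document; each statement's English description precedes it below -/
import Mathlib

section
/- Reformulation of the output operator: for every x ∈ X, C₁·col(x(0), x(L), x'(0), x'(L)) + ∫₀ᴸ (C_a(s)x(s) + C_b(s)x'(s)) ds = ∫₀ᴸ C₃(θ) x''(θ) dθ. -/
open Matrix MeasureTheory intervalIntegral

noncomputable section

/-- The stacked boundary-value vector `col(a, b, c, d) ∈ ℝ^{4n}`. -/
def col4 {n : ℕ} (a b c d : Fin n → ℝ) : (Fin n ⊕ Fin n) ⊕ (Fin n ⊕ Fin n) → ℝ :=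
  Sum.elim (Sum.elim a b) (Sum.elim c d)

/-- The `4n × 2n` matrix `K` with block rows `[I,0], [I,L·I], [0,I], [0,I]`. -/
def Kmat (n : ℕ) (L : ℝ) :
    Matrix ((Fin n ⊕ Fin n) ⊕ (Fin n ⊕ Fin n)) (Fin n ⊕ Fin n) ℝ :=
  Matrix.fromRows
    (Matrix.fromRows (Matrix.fromCols 1 0) (Matrix.fromCols 1 (L • 1)))
    (Matrix.fromRows (Matrix.fromCols 0 1) (Matrix.fromCols 0 1))

/-- The `4n × n` block column `col(0, (L−η)I, 0, I)`. -/
def colB (n : ℕ) (L η : ℝ) :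
    Matrix ((Fin n ⊕ Fin n) ⊕ (Fin n ⊕ Fin n)) (Fin n) ℝ :=
  Matrix.fromRows (Matrix.fromRows 0 ((L - η) • 1)) (Matrix.fromRows 0 1)

/-- `B_c(η) := −(B·K)⁻¹·B·col(0, (L−η)I, 0, I)`. -/
def Bc {n : ℕ} (L : ℝ) (B : Matrix (Fin n ⊕ Fin n) ((Fin n ⊕ Fin n) ⊕ (Fin n ⊕ Fin n)) ℝ)
    (η : ℝ) : Matrix (Fin n ⊕ Fin n) (Fin n) ℝ :=
  -((B * Kmat n L)⁻¹ * (B * colB n L η))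

/-- `G₁(s,η) := [I, s·I]·B_c(η) + 1_{[η,L]}(s)·(s−η)·I`. -/
def G1 {n : ℕ} (L : ℝ) (B : Matrix (Fin n ⊕ Fin n) ((Fin n ⊕ Fin n) ⊕ (Fin n ⊕ Fin n)) ℝ)
    (s η : ℝ) : Matrix (Fin n) (Fin n) ℝ :=
  Matrix.fromCols 1 (s • 1) * Bc L B η + (if η ≤ s then s - η else 0) • 1

/-- `G₂(s,η) := [0, I]·B_c(η) + 1_{[η,L]}(s)·I`. -/
def G2 {n : ℕ} (L : ℝ) (B : Matrix (Fin n ⊕ Fin n) ((Fin n ⊕ Fin n) ⊕ (Fin n ⊕ Fin n)) ℝ)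
    (s η : ℝ) : Matrix (Fin n) (Fin n) ℝ :=
  Matrix.fromCols 0 1 * Bc L B η + (if η ≤ s then (1:ℝ) else 0) • 1

/-- Membership in `X`: `x` is twice continuously differentiable on `[0,L]`, with first and
second derivative witnesses `x'` and `x''`, and satisfies the boundary conditions. -/
structure InX {n : ℕ} (L : ℝ)
    (B : Matrix (Fin n ⊕ Fin n) ((Fin n ⊕ Fin n) ⊕ (Fin n ⊕ Fin n)) ℝ)
    (x x' x'' : ℝ → Fin n → ℝ) : Prop where
  deriv1 : ∀ s ∈ Set.Icc (0:ℝ) L, HasDerivWithinAt x (x' s) (Set.Icc (0:ℝ) L) s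
  deriv2 : ∀ s ∈ Set.Icc (0:ℝ) L, HasDerivWithinAt x' (x'' s) (Set.Icc (0:ℝ) L) s
  cont : ContinuousOn x'' (Set.Icc (0:ℝ) L)
  bc : B *ᵥ col4 (x 0) (x L) (x' 0) (x' L) = 0


attribute [local instance] Matrix.normedAddCommGroup Matrix.normedSpace

/-- `C₃(θ) := C₁·(K·B_c(θ) + col(0,(L−θ)I,0,I)) + ∫₀ᴸ (C_a(s)G₁(s,θ) + C_b(s)G₂(s,θ)) ds`. -/
def C3 {n q : ℕ} (L : ℝ)
    (B : Matrix (Fin n ⊕ Fin n) ((Fin n ⊕ Fin n) ⊕ (Fin n ⊕ Fin n)) ℝ)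
    (C1 : Matrix (Fin q) ((Fin n ⊕ Fin n) ⊕ (Fin n ⊕ Fin n)) ℝ)
    (Ca Cb : ℝ → Matrix (Fin q) (Fin n) ℝ) (θ : ℝ) : Matrix (Fin q) (Fin n) ℝ :=
  C1 * (Kmat n L * Bc L B θ + colB n L θ)
    + ∫ s in (0:ℝ)..L, (Ca s * G1 L B s θ + Cb s * G2 L B s θ)

/-! ### Auxiliary lemmas -/

instance matENormedAddMonoid {l m : Type*} [Fintype l] [Fintype m] :
    ENormedAddMonoid (Matrix l m ℝ) :=
  (@NormedAddCommGroup.toENormedAddCommMonoid _ Matrix.normedAddCommGroup).toENormedAddMonoid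

instance matPseudoMetrizable {l m : Type*} [Fintype l] [Fintype m] :
    TopologicalSpace.PseudoMetrizableSpace (Matrix l m ℝ) :=
  inferInstanceAs (TopologicalSpace.PseudoMetrizableSpace (l → m → ℝ))

section AuxHelpers

open Set

variable {l m : Type*} [Fintype l] [Fintype m]

/-- `mulVec` by a fixed matrix, as a continuous linear map. -/
def mulVecCLM (A : Matrix l m ℝ) : (m → ℝ) →L[ℝ] (l → ℝ) :=
  (Matrix.mulVecLin A).toContinuousLinearMap

/-- Application of a matrix to a fixed vector, as a continuous linear map. -/
def appCLM [DecidableEq m] (v : m → ℝ) : Matrix l m ℝ →L[ℝ] (l → ℝ) :=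
  LinearMap.toContinuousLinearMap
    { toFun := fun M => M *ᵥ v
      map_add' := fun M N => Matrix.add_mulVec M N v
      map_smul' := fun c M => by simp [Matrix.smul_mulVec] }

lemma mulVec_intervalIntegral (A : Matrix l m ℝ)
    {f : ℝ → m → ℝ} {a b : ℝ} (hf : IntervalIntegrable f volume a b) :
    A *ᵥ (∫ t in a..b, f t) = ∫ t in a..b, A *ᵥ f t := by
  have := (mulVecCLM A).intervalIntegral_comp_comm hf
  simpa [mulVecCLM] using this.symm

lemma intervalIntegrable_mulVec_comp (A : Matrix l m ℝ)
    {f : ℝ → m → ℝ} {a b : ℝ} (hf : IntervalIntegrable f volume a b) :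
    IntervalIntegrable (fun t => A *ᵥ f t) volume a b := by
  refine ⟨?_, ?_⟩
  · simpa [mulVecCLM, IntegrableOn] using (mulVecCLM A).integrable_comp hf.1
  · simpa [mulVecCLM, IntegrableOn] using (mulVecCLM A).integrable_comp hf.2

lemma intervalIntegral_mulVec_const [DecidableEq m]
    {f : ℝ → Matrix l m ℝ} {a b : ℝ} (hf : IntervalIntegrable f volume a b) (v : m → ℝ) :
    (∫ t in a..b, f t) *ᵥ v = ∫ t in a..b, f t *ᵥ v := by
  have := (appCLM (l := l) v).intervalIntegral_comp_comm hf
  exact this.symm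

lemma intervalIntegral_pi_apply {ι : Type*} [Fintype ι] {f : ℝ → ι → ℝ} {a b : ℝ}
    (hf : IntervalIntegrable f volume a b) (i : ι) :
    (∫ t in a..b, f t) i = ∫ t in a..b, f t i := by
  have := (ContinuousLinearMap.proj (R := ℝ) (φ := fun _ : ι => ℝ) i).intervalIntegral_comp_comm hf
  simpa using this.symm

lemma contOn_mulVec {α : Type*} [TopologicalSpace α] {s : Set α}
    {A : α → Matrix l m ℝ} {v : α → m → ℝ}
    (hA : ContinuousOn A s) (hv : ContinuousOn v s) :
    ContinuousOn (fun t => A t *ᵥ v t) s := by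
  have c : Continuous (fun p : Matrix l m ℝ × (m → ℝ) => p.1 *ᵥ p.2) :=
    continuous_fst.matrix_mulVec continuous_snd
  exact c.comp_continuousOn (hA.prodMk hv)

lemma contOn_matMul {k : Type*} [Fintype k] {α : Type*} [TopologicalSpace α] {s : Set α}
    {A : α → Matrix l m ℝ} {Bf : α → Matrix m k ℝ}
    (hA : ContinuousOn A s) (hB : ContinuousOn Bf s) :
    ContinuousOn (fun t => A t * Bf t) s := by
  have c : Continuous (fun p : Matrix l m ℝ × Matrix m k ℝ => p.1 * p.2) :=
    continuous_fst.matrix_mul continuous_snd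
  exact c.comp_continuousOn (hA.prodMk hB)

lemma IIc {E : Type*} [NormedAddCommGroup E] {f : ℝ → E} {a b : ℝ} (hab : a ≤ b)
    (h : ContinuousOn f (Icc a b)) : IntervalIntegrable f volume a b :=
  ContinuousOn.intervalIntegrable (by rwa [uIcc_of_le hab])

lemma ftc_vec {E : Type*} [NormedAddCommGroup E] [NormedSpace ℝ E] [CompleteSpace E]
    {f f' : ℝ → E} {L a b : ℝ}
    (hab : a ≤ b) (ha : a ∈ Icc (0:ℝ) L) (hb : b ∈ Icc (0:ℝ) L)
    (hd : ∀ s ∈ Icc (0:ℝ) L, HasDerivWithinAt f (f' s) (Icc (0:ℝ) L) s)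
    (hc : ContinuousOn f' (Icc (0:ℝ) L)) :
    ∫ t in a..b, f' t = f b - f a := by
  have hsub : Icc a b ⊆ Icc (0:ℝ) L := Icc_subset_Icc ha.1 hb.2
  apply intervalIntegral.integral_eq_sub_of_hasDeriv_right_of_le hab
  · exact fun t ht => ((hd t (hsub ht)).continuousWithinAt).mono hsub
  · intro t ht
    have htL : t ∈ Ioo (0:ℝ) L := ⟨lt_of_le_of_lt ha.1 ht.1, lt_of_lt_of_le ht.2 hb.2⟩
    exact (((hd t (Ioo_subset_Icc_self htL)).hasDerivAt
      (Icc_mem_nhds htL.1 htL.2)).hasDerivWithinAt)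
  · exact ContinuousOn.intervalIntegrable (by rw [uIcc_of_le hab]; exact hc.mono hsub)

end AuxHelpers

section MatrixHelpers

lemma Kmat_mulVec {n : ℕ} (L : ℝ) (u v : Fin n → ℝ) :
    Kmat n L *ᵥ Sum.elim u v
      = Sum.elim (Sum.elim u (u + L • v)) (Sum.elim v v) := by
  simp [Kmat, Matrix.fromRows_mulVec, Matrix.fromCols_mulVec,
    Matrix.fromBlocks_mulVec, Matrix.smul_mulVec]

lemma colB_mulVec {n : ℕ} (L η : ℝ) (u : Fin n → ℝ) :
    colB n L η *ᵥ u
      = Sum.elim (Sum.elim (0 : Fin n → ℝ) ((L - η) • u)) (Sum.elim (0 : Fin n → ℝ) u) := by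
  simp [colB, Matrix.fromRows_mulVec, Matrix.fromBlocks_mulVec, Matrix.smul_mulVec]

lemma P_mulVec {n : ℕ} (s : ℝ) (u v : Fin n → ℝ) :
    Matrix.fromCols (1 : Matrix (Fin n) (Fin n) ℝ) (s • 1) *ᵥ Sum.elim u v = u + s • v := by
  simp [Matrix.fromCols_mulVec, Matrix.smul_mulVec]

lemma Q_mulVec {n : ℕ} (u v : Fin n → ℝ) :
    Matrix.fromCols (0 : Matrix (Fin n) (Fin n) ℝ) 1 *ᵥ Sum.elim u v = v := by
  simp [Matrix.fromCols_mulVec]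

lemma colB_continuous (n : ℕ) (L : ℝ) : Continuous (fun η => colB n L η) := by
  apply continuous_matrix
  rintro ((i|i)|(i|i)) j <;>
    simp only [colB, Matrix.fromRows_apply_inl, Matrix.fromRows_apply_inr,
      Matrix.smul_apply, Matrix.zero_apply, smul_eq_mul] <;> fun_prop

lemma P_continuous (n : ℕ) :
    Continuous (fun s : ℝ => Matrix.fromCols (1 : Matrix (Fin n) (Fin n) ℝ) (s • (1 : Matrix (Fin n) (Fin n) ℝ))) := by
  apply continuous_matrix
  rintro i (j|j) <;>
    simp only [Matrix.fromCols_apply_inl, Matrix.fromCols_apply_inr,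
      Matrix.smul_apply, smul_eq_mul] <;> fun_prop

lemma Bc_continuous {n : ℕ} (L : ℝ)
    (B : Matrix (Fin n ⊕ Fin n) ((Fin n ⊕ Fin n) ⊕ (Fin n ⊕ Fin n)) ℝ) :
    Continuous (Bc L B) := by
  unfold Bc
  exact (continuous_const.matrix_mul (continuous_const.matrix_mul (colB_continuous n L))).neg

end MatrixHelpers

/-! ### The diagonal indicator set and the continuous part of the integrand -/

def Sdiag : Set (ℝ × ℝ) := {p | p.2 ≤ p.1}

lemma measurableSet_Sdiag : MeasurableSet Sdiag :=
  measurableSet_le measurable_snd measurable_fst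

/-- The "continuous part" of `Ca s * G1 + Cb s * G2`. -/
def MgAux {n q : ℕ} (L : ℝ)
    (B : Matrix (Fin n ⊕ Fin n) ((Fin n ⊕ Fin n) ⊕ (Fin n ⊕ Fin n)) ℝ)
    (Ca Cb : ℝ → Matrix (Fin q) (Fin n) ℝ) (p : ℝ × ℝ) : Matrix (Fin q) (Fin n) ℝ :=
  Ca p.1 * (Matrix.fromCols 1 (p.1 • (1 : Matrix (Fin n) (Fin n) ℝ)) * Bc L B p.2 : Matrix (Fin n) (Fin n) ℝ)
    + max (p.1 - p.2) 0 • Ca p.1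
    + Cb p.1 * (Matrix.fromCols (0 : Matrix (Fin n) (Fin n) ℝ) 1 * Bc L B p.2 : Matrix (Fin n) (Fin n) ℝ)

lemma Mm_split {n q : ℕ} (L : ℝ)
    (B : Matrix (Fin n ⊕ Fin n) ((Fin n ⊕ Fin n) ⊕ (Fin n ⊕ Fin n)) ℝ)
    (Ca Cb : ℝ → Matrix (Fin q) (Fin n) ℝ) (p : ℝ × ℝ) :
    Ca p.1 * G1 L B p.1 p.2 + Cb p.1 * G2 L B p.1 p.2
      = MgAux L B Ca Cb p + Sdiag.indicator (fun p => Cb p.1) p := by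
  by_cases hp : p.2 ≤ p.1
  · rw [Set.indicator_of_mem (show p ∈ Sdiag from hp)]
    simp only [G1, G2, if_pos hp, MgAux, Matrix.mul_add, Matrix.mul_smul, Matrix.mul_one,
      max_eq_left (sub_nonneg.2 hp), one_smul]
    abel
  · rw [Set.indicator_of_notMem (show p ∉ Sdiag from hp), add_zero]
    have hlt : p.1 - p.2 ≤ 0 := by
      have := lt_of_not_ge hp; linarith
    simp only [G1, G2, if_neg hp, MgAux, Matrix.mul_add, Matrix.mul_smul, Matrix.mul_one,
      max_eq_right hlt, zero_smul, Matrix.mul_zero, smul_zero, add_zero]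

set_option maxHeartbeats 2000000

theorem output_operator_reformulation
    (n q : ℕ) (hn : 1 ≤ n) (hq : 1 ≤ q) (L : ℝ) (hL : 0 < L)
    (B : Matrix (Fin n ⊕ Fin n) ((Fin n ⊕ Fin n) ⊕ (Fin n ⊕ Fin n)) ℝ)
    (hB : IsUnit (B * Kmat n L))
    (C1 : Matrix (Fin q) ((Fin n ⊕ Fin n) ⊕ (Fin n ⊕ Fin n)) ℝ)
    (Ca Cb : ℝ → Matrix (Fin q) (Fin n) ℝ)
    (hCa : ContinuousOn Ca (Set.Icc (0:ℝ) L)) (hCb : ContinuousOn Cb (Set.Icc (0:ℝ) L))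
    (x x' x'' : ℝ → Fin n → ℝ) (hX : InX L B x x' x'') :
    C1 *ᵥ col4 (x 0) (x L) (x' 0) (x' L)
        + ∫ s in (0:ℝ)..L, (Ca s *ᵥ x s + Cb s *ᵥ x' s)
      = ∫ θ in (0:ℝ)..L, C3 L B C1 Ca Cb θ *ᵥ x'' θ := by
  classical
  have hL0 : (0:ℝ) ≤ L := hL.le
  have hx''c := hX.cont
  have hx''II : IntervalIntegrable x'' volume 0 L := IIc hL0 hx''c
  -- Fundamental theorem of calculus for `x'`
  have hA : ∀ s ∈ Set.Icc (0:ℝ) L, ∫ θ in (0:ℝ)..s, x'' θ = x' s - x' 0 := fun s hs =>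
    ftc_vec hs.1 (Set.left_mem_Icc.2 hL0) hs hX.deriv2 hx''c
  -- Taylor formula with integral remainder for `x`
  have hT : ∀ s ∈ Set.Icc (0:ℝ) L,
      ∫ θ in (0:ℝ)..s, (s - θ) • x'' θ = x s - (x 0 + s • x' 0) := by
    intro s hs
    have hd : ∀ θ ∈ Set.Icc (0:ℝ) L,
        HasDerivWithinAt (fun t => x t + (s - t) • x' t) ((s - θ) • x'' θ)
          (Set.Icc (0:ℝ) L) θ := by
      intro θ hθ
      have h2 : HasDerivWithinAt (fun t : ℝ => s - t) (-1) (Set.Icc (0:ℝ) L) θ := by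
        simpa using (hasDerivWithinAt_id θ (Set.Icc (0:ℝ) L)).const_sub s
      have h4 := (hX.deriv1 θ hθ).add (h2.smul (hX.deriv2 θ hθ))
      refine h4.congr_deriv ?_
      simp only [neg_smul, one_smul]
      abel
    have hc : ContinuousOn (fun θ => (s - θ) • x'' θ) (Set.Icc (0:ℝ) L) :=
      (continuousOn_const.sub continuousOn_id).smul hx''c
    have h5 := ftc_vec hs.1 (Set.left_mem_Icc.2 hL0) hs hd hc
    rw [h5]
    simp
  have hxL : x L = x 0 + L • x' 0 + ∫ θ in (0:ℝ)..L, (L - θ) • x'' θ := by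
    rw [hT L (Set.right_mem_Icc.2 hL0)]; abel
  have hx'L : x' L = x' 0 + ∫ θ in (0:ℝ)..L, x'' θ := by
    rw [hA L (Set.right_mem_Icc.2 hL0)]; abel
  -- basic integrability facts
  have hcolBvII : IntervalIntegrable (fun θ => colB n L θ *ᵥ x'' θ) volume 0 L :=
    IIc hL0 (contOn_mulVec (colB_continuous n L).continuousOn hx''c)
  have hBcvII : IntervalIntegrable (fun θ => Bc L B θ *ᵥ x'' θ) volume 0 L :=
    IIc hL0 (contOn_mulVec (Bc_continuous L B).continuousOn hx''c)
  have hLθII : IntervalIntegrable (fun θ => (L - θ) • x'' θ) volume 0 L :=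
    IIc hL0 ((continuousOn_const.sub continuousOn_id).smul hx''c)
  -- the integral of `colB *ᵥ x''`, componentwise
  have hVeq : (∫ θ in (0:ℝ)..L, colB n L θ *ᵥ x'' θ)
      = Sum.elim (Sum.elim (0 : Fin n → ℝ) (∫ θ in (0:ℝ)..L, (L - θ) • x'' θ))
          (Sum.elim (0 : Fin n → ℝ) (∫ θ in (0:ℝ)..L, x'' θ)) := by
    funext i
    rcases i with (i|i) | (i|i)
    · rw [intervalIntegral_pi_apply hcolBvII]
      simp [colB_mulVec]
    · rw [intervalIntegral_pi_apply hcolBvII, Sum.elim_inl, Sum.elim_inr,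
        intervalIntegral_pi_apply hLθII]
      simp [colB_mulVec]
    · rw [intervalIntegral_pi_apply hcolBvII]
      simp [colB_mulVec]
    · rw [intervalIntegral_pi_apply hcolBvII, Sum.elim_inr, Sum.elim_inr,
        intervalIntegral_pi_apply hx''II]
      simp [colB_mulVec]
  -- the boundary vector in terms of `x''`
  have hcol4 : col4 (x 0) (x L) (x' 0) (x' L)
      = Kmat n L *ᵥ Sum.elim (x 0) (x' 0) + ∫ θ in (0:ℝ)..L, colB n L θ *ᵥ x'' θ := by
    rw [hVeq, Kmat_mulVec]
    funext i
    rcases i with (i|i) | (i|i) <;> simp [col4, hxL, hx'L]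
  -- solving the boundary conditions
  have hdet : IsUnit (B * Kmat n L).det := (Matrix.isUnit_iff_isUnit_det _).1 hB
  have hwV : Sum.elim (x 0) (x' 0)
      = -(((B * Kmat n L)⁻¹ * B) *ᵥ (∫ θ in (0:ℝ)..L, colB n L θ *ᵥ x'' θ)) := by
    have hbc := hX.bc
    rw [hcol4, Matrix.mulVec_add, Matrix.mulVec_mulVec] at hbc
    have h1 : (B * Kmat n L) *ᵥ Sum.elim (x 0) (x' 0)
        = -(B *ᵥ ∫ θ in (0:ℝ)..L, colB n L θ *ᵥ x'' θ) :=
      eq_neg_of_add_eq_zero_left hbc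
    calc Sum.elim (x 0) (x' 0)
        = ((B * Kmat n L)⁻¹ * (B * Kmat n L)) *ᵥ Sum.elim (x 0) (x' 0) := by
          rw [Matrix.nonsing_inv_mul _ hdet, Matrix.one_mulVec]
      _ = (B * Kmat n L)⁻¹ *ᵥ ((B * Kmat n L) *ᵥ Sum.elim (x 0) (x' 0)) := by
          rw [Matrix.mulVec_mulVec]
      _ = (B * Kmat n L)⁻¹ *ᵥ -(B *ᵥ ∫ θ in (0:ℝ)..L, colB n L θ *ᵥ x'' θ) := by rw [h1]
      _ = -(((B * Kmat n L)⁻¹ * B) *ᵥ (∫ θ in (0:ℝ)..L, colB n L θ *ᵥ x'' θ)) := by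
          rw [Matrix.mulVec_neg, Matrix.mulVec_mulVec]
  have hwInt : Sum.elim (x 0) (x' 0) = ∫ θ in (0:ℝ)..L, Bc L B θ *ᵥ x'' θ := by
    have hBce : (fun θ => Bc L B θ *ᵥ x'' θ)
        = fun θ => -(((B * Kmat n L)⁻¹ * B) *ᵥ (colB n L θ *ᵥ x'' θ)) := by
      funext θ
      rw [Bc, Matrix.neg_mulVec, Matrix.mulVec_mulVec, ← Matrix.mul_assoc]
    rw [hBce, intervalIntegral.integral_neg, ← mulVec_intervalIntegral _ hcolBvII, ← hwV]
  -- pointwise rewriting of `G1 *ᵥ x''` and `G2 *ᵥ x''`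
  have hG1v : ∀ s θ : ℝ, G1 L B s θ *ᵥ x'' θ
      = (Matrix.fromCols 1 (s • (1 : Matrix (Fin n) (Fin n) ℝ)) * Bc L B θ) *ᵥ x'' θ
        + max (s - θ) 0 • x'' θ := by
    intro s θ
    have hmax : (if θ ≤ s then s - θ else 0) = max (s - θ) 0 := by
      split_ifs with h
      · rw [max_eq_left (by linarith)]
      · push_neg at h
        rw [max_eq_right (by linarith)]
    rw [G1, Matrix.add_mulVec, hmax, Matrix.smul_mulVec, Matrix.one_mulVec]
  have hG2v : ∀ s θ : ℝ, G2 L B s θ *ᵥ x'' θ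
      = (Matrix.fromCols (0 : Matrix (Fin n) (Fin n) ℝ) 1 * Bc L B θ) *ᵥ x'' θ + Set.indicator (Set.Iic s) x'' θ := by
    intro s θ
    rw [G2, Matrix.add_mulVec, Matrix.smul_mulVec, Matrix.one_mulVec]
    congr 1
    by_cases h : θ ≤ s
    · rw [if_pos h, one_smul, Set.indicator_of_mem (show θ ∈ Set.Iic s from h)]
    · rw [if_neg h, zero_smul, Set.indicator_of_notMem (show θ ∉ Set.Iic s from h)]
  have hPBcII : ∀ s : ℝ, IntervalIntegrable
      (fun θ => (Matrix.fromCols 1 (s • (1 : Matrix (Fin n) (Fin n) ℝ)) * Bc L B θ : Matrix (Fin n) (Fin n) ℝ) *ᵥ x'' θ)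
      volume 0 L := fun s =>
    IIc hL0 (contOn_mulVec (contOn_matMul continuousOn_const (Bc_continuous L B).continuousOn)
      hx''c)
  have hQBcII : IntervalIntegrable
      (fun θ => (Matrix.fromCols (0 : Matrix (Fin n) (Fin n) ℝ) 1 * Bc L B θ : Matrix (Fin n) (Fin n) ℝ) *ᵥ x'' θ) volume 0 L :=
    IIc hL0 (contOn_mulVec (contOn_matMul continuousOn_const (Bc_continuous L B).continuousOn)
      hx''c)
  have hmaxII : ∀ s : ℝ, IntervalIntegrable (fun θ => max (s - θ) 0 • x'' θ) volume 0 L :=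
    fun s => IIc hL0 ((((continuous_const.sub continuous_id).max continuous_const).continuousOn).smul
      hx''c)
  have hx''IOnIoc : IntegrableOn x'' (Set.Ioc 0 L) volume :=
    (hx''c.integrableOn_Icc).mono_set Set.Ioc_subset_Icc_self
  have hindII : ∀ s : ℝ, IntervalIntegrable (fun θ => Set.indicator (Set.Iic s) x'' θ)
      volume 0 L := by
    intro s
    rw [intervalIntegrable_iff_integrableOn_Ioc_of_le hL0]
    exact hx''IOnIoc.indicator measurableSet_Iic
  have hG1II : ∀ s : ℝ, IntervalIntegrable (fun θ => G1 L B s θ *ᵥ x'' θ) volume 0 L := by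
    intro s
    simp only [hG1v]
    exact (hPBcII s).add (hmaxII s)
  have hG2II : ∀ s : ℝ, IntervalIntegrable (fun θ => G2 L B s θ *ᵥ x'' θ) volume 0 L := by
    intro s
    simp only [hG2v]
    exact hQBcII.add (hindII s)
  -- the representation of `x` via `G1`
  have hxs : ∀ s ∈ Set.Icc (0:ℝ) L, x s = ∫ θ in (0:ℝ)..L, G1 L B s θ *ᵥ x'' θ := by
    intro s hs
    simp only [hG1v]
    rw [intervalIntegral.integral_add (hPBcII s) (hmaxII s)]
    have e1 : (∫ θ in (0:ℝ)..L,
        (Matrix.fromCols 1 (s • (1 : Matrix (Fin n) (Fin n) ℝ)) * Bc L B θ : Matrix (Fin n) (Fin n) ℝ) *ᵥ x'' θ)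
        = x 0 + s • x' 0 := by
      have hmv : ∀ θ, (Matrix.fromCols 1 (s • (1 : Matrix (Fin n) (Fin n) ℝ)) * Bc L B θ : Matrix (Fin n) (Fin n) ℝ) *ᵥ x'' θ
          = Matrix.fromCols 1 (s • (1 : Matrix (Fin n) (Fin n) ℝ)) *ᵥ (Bc L B θ *ᵥ x'' θ) :=
        fun θ => (Matrix.mulVec_mulVec _ _ _).symm
      simp only [hmv]
      rw [← mulVec_intervalIntegral _ hBcvII, ← hwInt, P_mulVec]
    have e2 : (∫ θ in (0:ℝ)..L, max (s - θ) 0 • x'' θ) = x s - (x 0 + s • x' 0) := by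
      have hsub1 : IntervalIntegrable (fun θ => max (s - θ) 0 • x'' θ) volume 0 s :=
        (hmaxII s).mono_set
          (by rw [Set.uIcc_of_le hs.1, Set.uIcc_of_le hL0]; exact Set.Icc_subset_Icc le_rfl hs.2)
      have hsub2 : IntervalIntegrable (fun θ => max (s - θ) 0 • x'' θ) volume s L :=
        (hmaxII s).mono_set
          (by rw [Set.uIcc_of_le hs.2, Set.uIcc_of_le hL0]; exact Set.Icc_subset_Icc hs.1 le_rfl)
      rw [← intervalIntegral.integral_add_adjacent_intervals hsub1 hsub2]
      have z : (∫ θ in s..L, max (s - θ) 0 • x'' θ) = 0 := by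
        have hz : Set.EqOn (fun θ => max (s - θ) 0 • x'' θ) (fun _ => (0 : Fin n → ℝ))
            (Set.uIcc s L) := by
          intro θ hθ
          rw [Set.uIcc_of_le hs.2] at hθ
          have : s - θ ≤ 0 := by linarith [hθ.1]
          simp [max_eq_right this]
        rw [intervalIntegral.integral_congr hz]
        simp
      have m : (∫ θ in (0:ℝ)..s, max (s - θ) 0 • x'' θ) = ∫ θ in (0:ℝ)..s, (s - θ) • x'' θ := by
        apply intervalIntegral.integral_congr
        intro θ hθ
        rw [Set.uIcc_of_le hs.1] at hθ
        have : (0:ℝ) ≤ s - θ := by linarith [hθ.2]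
        simp [max_eq_left this]
      rw [z, add_zero, m, hT s hs]
    rw [e1, e2]
    abel
  -- the representation of `x'` via `G2`
  have hx's : ∀ s ∈ Set.Icc (0:ℝ) L, x' s = ∫ θ in (0:ℝ)..L, G2 L B s θ *ᵥ x'' θ := by
    intro s hs
    simp only [hG2v]
    rw [intervalIntegral.integral_add hQBcII (hindII s)]
    have e1 : (∫ θ in (0:ℝ)..L, (Matrix.fromCols (0 : Matrix (Fin n) (Fin n) ℝ) 1 * Bc L B θ : Matrix (Fin n) (Fin n) ℝ) *ᵥ x'' θ) = x' 0 := by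
      have hmv : ∀ θ, (Matrix.fromCols (0 : Matrix (Fin n) (Fin n) ℝ) 1 * Bc L B θ : Matrix (Fin n) (Fin n) ℝ) *ᵥ x'' θ
          = Matrix.fromCols (0 : Matrix (Fin n) (Fin n) ℝ) 1 *ᵥ (Bc L B θ *ᵥ x'' θ) :=
        fun θ => (Matrix.mulVec_mulVec _ _ _).symm
      simp only [hmv]
      rw [← mulVec_intervalIntegral _ hBcvII, ← hwInt, Q_mulVec]
    have e2 : (∫ θ in (0:ℝ)..L, Set.indicator (Set.Iic s) x'' θ) = x' s - x' 0 := by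
      have hsub1 : IntervalIntegrable (fun θ => Set.indicator (Set.Iic s) x'' θ) volume 0 s :=
        (hindII s).mono_set
          (by rw [Set.uIcc_of_le hs.1, Set.uIcc_of_le hL0]; exact Set.Icc_subset_Icc le_rfl hs.2)
      have hsub2 : IntervalIntegrable (fun θ => Set.indicator (Set.Iic s) x'' θ) volume s L :=
        (hindII s).mono_set
          (by rw [Set.uIcc_of_le hs.2, Set.uIcc_of_le hL0]; exact Set.Icc_subset_Icc hs.1 le_rfl)
      rw [← intervalIntegral.integral_add_adjacent_intervals hsub1 hsub2]
      have m : (∫ θ in (0:ℝ)..s, Set.indicator (Set.Iic s) x'' θ) = ∫ θ in (0:ℝ)..s, x'' θ := by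
        apply intervalIntegral.integral_congr
        intro θ hθ
        rw [Set.uIcc_of_le hs.1] at hθ
        exact Set.indicator_of_mem (show θ ∈ Set.Iic s from hθ.2) x''
      have z : (∫ θ in s..L, Set.indicator (Set.Iic s) x'' θ) = 0 := by
        rw [intervalIntegral.integral_of_le hs.2,
          MeasureTheory.setIntegral_congr_fun measurableSet_Ioc
            (g := fun _ => (0 : Fin n → ℝ))
            (fun θ hθ => Set.indicator_of_notMem (show θ ∉ Set.Iic s from not_le.2 hθ.1) x'')]
        simp
      rw [m, z, add_zero, hA s hs]
    rw [e1, e2]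
    abel
  -- first term of the left-hand side
  have hKBcII : IntervalIntegrable (fun θ => (Kmat n L * Bc L B θ + colB n L θ) *ᵥ x'' θ)
      volume 0 L :=
    IIc hL0 (contOn_mulVec ((contOn_matMul continuousOn_const
      (Bc_continuous L B).continuousOn).add (colB_continuous n L).continuousOn) hx''c)
  have hcol4' : col4 (x 0) (x L) (x' 0) (x' L)
      = ∫ θ in (0:ℝ)..L, (Kmat n L * Bc L B θ + colB n L θ) *ᵥ x'' θ := by
    rw [hcol4, hwInt, mulVec_intervalIntegral _ hBcvII,
      ← intervalIntegral.integral_add (intervalIntegrable_mulVec_comp _ hBcvII) hcolBvII]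
    simp only [Matrix.add_mulVec, Matrix.mulVec_mulVec]
  have hterm1 : C1 *ᵥ col4 (x 0) (x L) (x' 0) (x' L)
      = ∫ θ in Set.Ioc (0:ℝ) L, (C1 * (Kmat n L * Bc L B θ + colB n L θ)) *ᵥ x'' θ := by
    rw [hcol4', mulVec_intervalIntegral _ hKBcII, intervalIntegral.integral_of_le hL0]
    simp only [Matrix.mulVec_mulVec]
  -- joint integrability on the product for Fubini
  have hx''2 : ContinuousOn (fun p : ℝ × ℝ => x'' p.2)
      (Set.Icc (0:ℝ) L ×ˢ Set.Icc (0:ℝ) L) :=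
    hx''c.comp continuous_snd.continuousOn (fun p hp => hp.2)
  have hCa2 : ContinuousOn (fun p : ℝ × ℝ => Ca p.1)
      (Set.Icc (0:ℝ) L ×ˢ Set.Icc (0:ℝ) L) :=
    hCa.comp continuous_fst.continuousOn (fun p hp => hp.1)
  have hCb2 : ContinuousOn (fun p : ℝ × ℝ => Cb p.1)
      (Set.Icc (0:ℝ) L ×ˢ Set.Icc (0:ℝ) L) :=
    hCb.comp continuous_fst.continuousOn (fun p hp => hp.1)
  have hBc2 : ContinuousOn (fun p : ℝ × ℝ => Bc L B p.2)
      (Set.Icc (0:ℝ) L ×ˢ Set.Icc (0:ℝ) L) :=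
    ((Bc_continuous L B).comp continuous_snd).continuousOn
  have hP2 : ContinuousOn
      (fun p : ℝ × ℝ => Matrix.fromCols 1 (p.1 • (1 : Matrix (Fin n) (Fin n) ℝ)))
      (Set.Icc (0:ℝ) L ×ˢ Set.Icc (0:ℝ) L) :=
    ((P_continuous n).comp continuous_fst).continuousOn
  have hMgc : ContinuousOn (MgAux L B Ca Cb) (Set.Icc (0:ℝ) L ×ˢ Set.Icc (0:ℝ) L) := by
    unfold MgAux
    exact ((contOn_matMul hCa2 (contOn_matMul hP2 hBc2)).add
      ((((continuous_fst.sub continuous_snd).max continuous_const).continuousOn).smul hCa2)).add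
      (contOn_matMul hCb2 (contOn_matMul continuousOn_const hBc2))
  have hΩc : IsCompact (Set.Icc (0:ℝ) L ×ˢ Set.Icc (0:ℝ) L) := isCompact_Icc.prod isCompact_Icc
  have hΩsub : Set.Ioc (0:ℝ) L ×ˢ Set.Ioc (0:ℝ) L ⊆ Set.Icc (0:ℝ) L ×ˢ Set.Icc (0:ℝ) L :=
    Set.prod_mono Set.Ioc_subset_Icc_self Set.Ioc_subset_Icc_self
  have hprodμ : (volume.restrict (Set.Ioc (0:ℝ) L)).prod (volume.restrict (Set.Ioc (0:ℝ) L))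
      = (volume : Measure (ℝ × ℝ)).restrict (Set.Ioc (0:ℝ) L ×ˢ Set.Ioc (0:ℝ) L) := by
    rw [Measure.prod_restrict, ← Measure.volume_eq_prod]
  have hgI : Integrable (fun p : ℝ × ℝ => MgAux L B Ca Cb p *ᵥ x'' p.2)
      ((volume.restrict (Set.Ioc (0:ℝ) L)).prod (volume.restrict (Set.Ioc (0:ℝ) L))) := by
    rw [hprodμ]
    exact ((contOn_mulVec hMgc hx''2).integrableOn_compact hΩc).mono_set hΩsub
  have hhI : Integrable (fun p : ℝ × ℝ => Cb p.1 *ᵥ x'' p.2)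
      ((volume.restrict (Set.Ioc (0:ℝ) L)).prod (volume.restrict (Set.Ioc (0:ℝ) L))) := by
    rw [hprodμ]
    exact ((contOn_mulVec hCb2 hx''2).integrableOn_compact hΩc).mono_set hΩsub
  have hfsplit : ∀ p : ℝ × ℝ,
      (Ca p.1 * G1 L B p.1 p.2 + Cb p.1 * G2 L B p.1 p.2) *ᵥ x'' p.2
        = MgAux L B Ca Cb p *ᵥ x'' p.2
          + Sdiag.indicator (fun p : ℝ × ℝ => Cb p.1 *ᵥ x'' p.2) p := by
    intro p
    rw [Mm_split L B Ca Cb p, Matrix.add_mulVec]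
    congr 1
    by_cases hp : p ∈ Sdiag
    · rw [Set.indicator_of_mem hp, Set.indicator_of_mem hp]
    · rw [Set.indicator_of_notMem hp, Set.indicator_of_notMem hp, Matrix.zero_mulVec]
  have hfI : Integrable
      (Function.uncurry fun s θ => (Ca s * G1 L B s θ + Cb s * G2 L B s θ) *ᵥ x'' θ)
      ((volume.restrict (Set.Ioc (0:ℝ) L)).prod (volume.restrict (Set.Ioc (0:ℝ) L))) := by
    have he : (Function.uncurry fun s θ => (Ca s * G1 L B s θ + Cb s * G2 L B s θ) *ᵥ x'' θ)
        = fun p : ℝ × ℝ => MgAux L B Ca Cb p *ᵥ x'' p.2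
            + Sdiag.indicator (fun p : ℝ × ℝ => Cb p.1 *ᵥ x'' p.2) p :=
      funext fun p => hfsplit p
    rw [he]
    exact hgI.add (hhI.indicator measurableSet_Sdiag)
  -- integrability of the matrix integrand in `s` for fixed `θ`
  have hCbIOn : IntegrableOn Cb (Set.Ioc (0:ℝ) L) volume :=
    (hCb.integrableOn_Icc).mono_set Set.Ioc_subset_Icc_self
  have hMmII : ∀ θ ∈ Set.Icc (0:ℝ) L,
      IntervalIntegrable (fun s => Ca s * G1 L B s θ + Cb s * G2 L B s θ) volume 0 L := by
    intro θ hθ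
    have heq : (fun s => Ca s * G1 L B s θ + Cb s * G2 L B s θ)
        = fun s => MgAux L B Ca Cb (s, θ) + Set.indicator (Set.Ici θ) Cb s := by
      funext s
      rw [Mm_split L B Ca Cb (s, θ)]
      congr 1
    rw [heq, intervalIntegrable_iff_integrableOn_Ioc_of_le hL0]
    apply MeasureTheory.Integrable.add
    · have hc : ContinuousOn (fun s => MgAux L B Ca Cb (s, θ)) (Set.Icc (0:ℝ) L) :=
        hMgc.comp (continuous_id.prodMk continuous_const).continuousOn
          (fun s hs => ⟨hs, hθ⟩)
      exact (hc.integrableOn_Icc).mono_set Set.Ioc_subset_Icc_self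
    · exact hCbIOn.indicator measurableSet_Ici
  -- inner integral identity
  have hinner : ∀ θ ∈ Set.Ioc (0:ℝ) L,
      (∫ s in Set.Ioc (0:ℝ) L, (Ca s * G1 L B s θ + Cb s * G2 L B s θ) *ᵥ x'' θ)
        = (∫ s in (0:ℝ)..L, (Ca s * G1 L B s θ + Cb s * G2 L B s θ)) *ᵥ x'' θ := by
    intro θ hθ
    rw [intervalIntegral_mulVec_const (hMmII θ (Set.Ioc_subset_Icc_self hθ)) (x'' θ),
      intervalIntegral.integral_of_le hL0]
  -- second term of the left-hand side
  have hstep : ∀ s ∈ Set.Icc (0:ℝ) L, Ca s *ᵥ x s + Cb s *ᵥ x' s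
      = ∫ θ in (0:ℝ)..L, (Ca s * G1 L B s θ + Cb s * G2 L B s θ) *ᵥ x'' θ := by
    intro s hs
    rw [hxs s hs, hx's s hs, mulVec_intervalIntegral _ (hG1II s),
      mulVec_intervalIntegral _ (hG2II s),
      ← intervalIntegral.integral_add (intervalIntegrable_mulVec_comp _ (hG1II s))
        (intervalIntegrable_mulVec_comp _ (hG2II s))]
    simp only [Matrix.add_mulVec, Matrix.mulVec_mulVec]
  have hLHS2 : (∫ s in (0:ℝ)..L, (Ca s *ᵥ x s + Cb s *ᵥ x' s))
      = ∫ θ in Set.Ioc (0:ℝ) L,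
          (∫ s in (0:ℝ)..L, (Ca s * G1 L B s θ + Cb s * G2 L B s θ)) *ᵥ x'' θ := by
    calc (∫ s in (0:ℝ)..L, (Ca s *ᵥ x s + Cb s *ᵥ x' s))
        = ∫ s in (0:ℝ)..L, ∫ θ in (0:ℝ)..L,
            (Ca s * G1 L B s θ + Cb s * G2 L B s θ) *ᵥ x'' θ := by
          apply intervalIntegral.integral_congr
          intro s hs
          rw [Set.uIcc_of_le hL0] at hs
          exact hstep s hs
      _ = ∫ s in Set.Ioc (0:ℝ) L, ∫ θ in Set.Ioc (0:ℝ) L,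
            (Ca s * G1 L B s θ + Cb s * G2 L B s θ) *ᵥ x'' θ := by
          simp only [intervalIntegral.integral_of_le hL0]
      _ = ∫ θ in Set.Ioc (0:ℝ) L, ∫ s in Set.Ioc (0:ℝ) L,
            (Ca s * G1 L B s θ + Cb s * G2 L B s θ) *ᵥ x'' θ :=
          MeasureTheory.integral_integral_swap hfI
      _ = ∫ θ in Set.Ioc (0:ℝ) L,
            (∫ s in (0:ℝ)..L, (Ca s * G1 L B s θ + Cb s * G2 L B s θ)) *ᵥ x'' θ :=
          MeasureTheory.setIntegral_congr_fun measurableSet_Ioc (fun θ hθ => hinner θ hθ)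
  -- integrability of the two final integrands
  have ht1 : IntegrableOn (fun θ => (C1 * (Kmat n L * Bc L B θ + colB n L θ)) *ᵥ x'' θ)
      (Set.Ioc (0:ℝ) L) volume :=
    ((contOn_mulVec (contOn_matMul continuousOn_const ((contOn_matMul continuousOn_const
      (Bc_continuous L B).continuousOn).add (colB_continuous n L).continuousOn))
      hx''c).integrableOn_Icc).mono_set Set.Ioc_subset_Icc_self
  have ht2 : IntegrableOn
      (fun θ => (∫ s in (0:ℝ)..L, (Ca s * G1 L B s θ + Cb s * G2 L B s θ)) *ᵥ x'' θ)
      (Set.Ioc (0:ℝ) L) volume := by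
    have h0 := hfI.integral_prod_right
    apply h0.congr
    filter_upwards [MeasureTheory.self_mem_ae_restrict measurableSet_Ioc] with θ hθ
    exact hinner θ hθ
  -- final assembly
  rw [hterm1, hLHS2, intervalIntegral.integral_of_le hL0,
    ← MeasureTheory.integral_add ht1 ht2]
  exact MeasureTheory.setIntegral_congr_fun measurableSet_Ioc
    (fun θ hθ => by simp only [C3, Matrix.add_mulVec])
end
end

section
/- Square-root factorization identity used to prove Theorem 7: Let U₁ ∈ ℝ^{d×m}, U₂, U₃ ∈ ℝ^{d×d₂}, set T := [U₁ U₂ U₃]ᵀ[U₁ U₂ U₃] (so T_{ij} = UᵢᵀUⱼ), and let (P̂, Q, R₁, R₂) be given by the (Z, T) joint positivity formulas. For x₁ ∈ ℝ^m and continuous x₂ : [0,L] → ℝⁿ define v(s) := U₁x₁ + ∫₀ˢ U₂Z(s,θ)x₂(θ)dθ + ∫ₛᴸ U₃Z(s,θ)x₂(θ)dθ. Then ∫₀ᴸ |v(s)|² ds = L·x₁ᵀP̂x₁ + 2x₁ᵀ∫₀ᴸ Q(θ)x₂(θ)dθ + ∫₀ᴸ∫₀ˢ x₂(s)ᵀR₁(s,θ)x₂(θ)dθds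 + ∫₀ᴸ∫ₛᴸ x₂(s)ᵀR₂(s,θ)x₂(θ)dθds. -/
open Matrix MeasureTheory intervalIntegral

noncomputable section

attribute [local instance] Matrix.normedAddCommGroup Matrix.normedSpace

instance matENorm {k n : ℕ} : ENormedAddCommMonoid (Matrix (Fin k) (Fin n) ℝ) :=
  inferInstanceAs (ENormedAddCommMonoid (Fin k → Fin n → ℝ))

open Set

theorem myExt {X Y : Type} [TopologicalSpace X] [NormalSpace X] [TopologicalSpace Y]
    [TietzeExtension.{0,0} Y] {f : X → Y} {s : Set X} (hs : IsClosed s) (hf : ContinuousOn f s) :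
    ∃ g : X → Y, Continuous g ∧ ∀ x ∈ s, g x = f x := by
  obtain ⟨g, hg⟩ := ContinuousMap.exists_restrict_eq hs ⟨s.restrict f, hf.restrict⟩
  exact ⟨g, g.continuous, fun x hx => congrFun (congrArg ContinuousMap.toFun hg) ⟨x, hx⟩⟩


def dotCLM {k : ℕ} (v : Fin k → ℝ) : (Fin k → ℝ) →L[ℝ] ℝ :=
  LinearMap.toContinuousLinearMap
    { toFun := fun w => v ⬝ᵥ w
      map_add' := fun a b => dotProduct_add v a b
      map_smul' := fun c a => by simp [dotProduct_smul] }

@[simp] lemma dotCLM_apply {k : ℕ} (v w : Fin k → ℝ) : dotCLM v w = v ⬝ᵥ w := rfl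

def mvCLM {n k : ℕ} (x : Fin k → ℝ) (y : Fin n → ℝ) :
    Matrix (Fin k) (Fin n) ℝ →L[ℝ] ℝ :=
  LinearMap.toContinuousLinearMap
    { toFun := fun M => x ⬝ᵥ (M *ᵥ y)
      map_add' := fun A B => by simp [Matrix.add_mulVec]
      map_smul' := fun c A => by simp [Matrix.smul_mulVec] }

@[simp] lemma mvCLM_apply {n k : ℕ} (x : Fin k → ℝ) (y : Fin n → ℝ)
    (M : Matrix (Fin k) (Fin n) ℝ) : mvCLM x y M = x ⬝ᵥ (M *ᵥ y) := rfl

lemma dot_integral {k : ℕ} (v : Fin k → ℝ) {f : ℝ → Fin k → ℝ} {a b : ℝ}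
    (hf : IntervalIntegrable f volume a b) :
    v ⬝ᵥ (∫ t in a..b, f t) = ∫ t in a..b, v ⬝ᵥ f t :=
  ((dotCLM v).intervalIntegral_comp_comm hf).symm

lemma integral_dot {k : ℕ} (v : Fin k → ℝ) {f : ℝ → Fin k → ℝ} {a b : ℝ}
    (hf : IntervalIntegrable f volume a b) :
    (∫ t in a..b, f t) ⬝ᵥ v = ∫ t in a..b, f t ⬝ᵥ v := by
  rw [dotProduct_comm, dot_integral v hf]
  simp_rw [dotProduct_comm]

lemma dot_mv_integral {n k : ℕ} (x : Fin k → ℝ) (y : Fin n → ℝ)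
    {M : ℝ → Matrix (Fin k) (Fin n) ℝ} {a b : ℝ}
    (hM : IntervalIntegrable M volume a b) :
    x ⬝ᵥ ((∫ t in a..b, M t) *ᵥ y) = ∫ t in a..b, x ⬝ᵥ (M t *ᵥ y) :=
  ((mvCLM x y).intervalIntegral_comp_comm hM).symm

-- matrix algebra
lemma mv_dot_mv {k m p : ℕ} (A : Matrix (Fin k) (Fin m) ℝ) (B : Matrix (Fin k) (Fin p) ℝ)
    (x : Fin m → ℝ) (y : Fin p → ℝ) :
    (A *ᵥ x) ⬝ᵥ (B *ᵥ y) = x ⬝ᵥ ((Aᵀ * B) *ᵥ y) := by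
  rw [Matrix.dotProduct_mulVec, Matrix.dotProduct_mulVec, ← Matrix.vecMul_vecMul,
    Matrix.vecMul_transpose]

-- block lemmas
section blocks
variable {d m d₂ : ℕ} (U1 : Matrix (Fin d) (Fin m) ℝ) (U2 U3 : Matrix (Fin d) (Fin d₂) ℝ)

local notation "T" => (Matrix.fromCols U1 (Matrix.fromCols U2 U3))ᵀ *
  Matrix.fromCols U1 (Matrix.fromCols U2 U3)

lemma T11 : (T).submatrix Sum.inl Sum.inl = U1ᵀ * U1 := by
  ext i j; simp [Matrix.mul_apply]
lemma T12 : (T).submatrix Sum.inl (Sum.inr ∘ Sum.inl) = U1ᵀ * U2 := by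
  ext i j; simp [Matrix.mul_apply]
lemma T13 : (T).submatrix Sum.inl (Sum.inr ∘ Sum.inr) = U1ᵀ * U3 := by
  ext i j; simp [Matrix.mul_apply]
lemma T22 : (T).submatrix (Sum.inr ∘ Sum.inl) (Sum.inr ∘ Sum.inl) = U2ᵀ * U2 := by
  ext i j; simp [Matrix.mul_apply]
lemma T23 : (T).submatrix (Sum.inr ∘ Sum.inl) (Sum.inr ∘ Sum.inr) = U2ᵀ * U3 := by
  ext i j; simp [Matrix.mul_apply]
lemma T32 : (T).submatrix (Sum.inr ∘ Sum.inr) (Sum.inr ∘ Sum.inl) = U3ᵀ * U2 := by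
  ext i j; simp [Matrix.mul_apply]
lemma T33 : (T).submatrix (Sum.inr ∘ Sum.inr) (Sum.inr ∘ Sum.inr) = U3ᵀ * U3 := by
  ext i j; simp [Matrix.mul_apply]
end blocks

theorem cont_param {X : Type*} [TopologicalSpace X] {E : Type*} [NormedAddCommGroup E]
    [NormedSpace ℝ E] {f : X → ℝ → E} (hf : Continuous fun p : X × ℝ => f p.1 p.2)
    {u v : X → ℝ} (hu : Continuous u) (hv : Continuous v) :
    Continuous fun x => ∫ t in u x..v x, f x t := by
  have hsl : ∀ (x : X), ∀ a b : ℝ, IntervalIntegrable (f x) volume a b := fun x a b =>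
    (hf.comp (continuous_const.prodMk continuous_id)).intervalIntegrable a b
  have h : ∀ x, ∫ t in u x..v x, f x t
      = (∫ t in (0:ℝ)..v x, f x t) - ∫ t in (0:ℝ)..u x, f x t := by
    intro x
    rw [eq_sub_iff_add_eq, add_comm]
    exact intervalIntegral.integral_add_adjacent_intervals (hsl x 0 (u x)) (hsl x (u x) (v x))
  simp_rw [h]
  exact (intervalIntegral.continuous_parametric_intervalIntegral_of_continuous
      (f := f) hf hv).sub
    (intervalIntegral.continuous_parametric_intervalIntegral_of_continuous (f := f) hf hu)

theorem rect_swap {f : ℝ → ℝ → ℝ} (hf : Continuous fun p : ℝ × ℝ => f p.1 p.2)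
    {a b c d : ℝ} (hab : a ≤ b) (hcd : c ≤ d) :
    ∫ s in a..b, ∫ t in c..d, f s t = ∫ t in c..d, ∫ s in a..b, f s t := by
  have hint : Integrable (fun p : ℝ × ℝ => f p.1 p.2)
      ((volume.restrict (Ioc a b)).prod (volume.restrict (Ioc c d))) := by
    rw [Measure.prod_restrict]
    exact (hf.continuousOn.integrableOn_compact (isCompact_Icc.prod isCompact_Icc)).mono_set
      (prod_mono Ioc_subset_Icc_self Ioc_subset_Icc_self)
  rw [intervalIntegral.integral_of_le hab, intervalIntegral.integral_of_le hcd]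
  rw [setIntegral_congr_fun measurableSet_Ioc
    (fun s _ => intervalIntegral.integral_of_le hcd),
    setIntegral_congr_fun measurableSet_Ioc
    (fun t _ => intervalIntegral.integral_of_le hab)]
  exact MeasureTheory.integral_integral_swap hint

theorem tri_swap {f : ℝ → ℝ → ℝ} (hf : Continuous fun p : ℝ × ℝ => f p.1 p.2)
    {a c : ℝ} (hac : a ≤ c) :
    ∫ β in a..c, ∫ t in a..β, f β t = ∫ t in a..c, ∫ β in t..c, f β t := by
  set F : ℝ × ℝ → ℝ := fun p => if p.2 ≤ p.1 then f p.1 p.2 else 0 with hF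
  have hFind : F = Set.indicator {p : ℝ × ℝ | p.2 ≤ p.1} (fun p => f p.1 p.2) := by
    ext p; simp [hF, Set.indicator_apply]
  have hFi : Integrable F ((volume.restrict (Ioc a c)).prod (volume.restrict (Ioc a c))) := by
    rw [Measure.prod_restrict, hFind]
    exact ((hf.continuousOn.integrableOn_compact (isCompact_Icc.prod isCompact_Icc)).mono_set
      (prod_mono Ioc_subset_Icc_self Ioc_subset_Icc_self)).indicator
      (isClosed_le continuous_snd continuous_fst).measurableSet
  have step1 : ∫ β in a..c, ∫ t in a..β, f β t
      = ∫ β in Ioc a c, ∫ t in Ioc a c, F (β, t) := by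
    rw [intervalIntegral.integral_of_le hac]
    refine setIntegral_congr_fun measurableSet_Ioc (fun β hβ => ?_)
    rw [intervalIntegral.integral_of_le hβ.1.le]
    have h1 : ∀ t, F (β, t) = (Iic β).indicator (f β) t := by
      intro t; simp [hF, Set.indicator_apply]
    simp_rw [h1]
    rw [setIntegral_indicator measurableSet_Iic]
    congr 1
    rw [Ioc_inter_Iic, min_eq_right hβ.2]
  have step3 : ∫ t in Ioc a c, ∫ β in Ioc a c, F (β, t)
      = ∫ t in a..c, ∫ β in t..c, f β t := by
    rw [intervalIntegral.integral_of_le hac]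
    refine setIntegral_congr_fun measurableSet_Ioc (fun t ht => ?_)
    rw [intervalIntegral.integral_of_le ht.2]
    have h1 : ∀ β, F (β, t) = (Ici t).indicator (fun β => f β t) β := by
      intro β; simp [hF, Set.indicator_apply]
    simp_rw [h1]
    rw [setIntegral_indicator measurableSet_Ici]
    have h2 : Ioc a c ∩ Ici t = Icc t c := by
      ext x
      simp only [mem_inter_iff, mem_Ioc, mem_Ici, mem_Icc]
      constructor
      · rintro ⟨⟨_, h⟩, h'⟩; exact ⟨h', h⟩
      · rintro ⟨h', h⟩; exact ⟨⟨lt_of_lt_of_le ht.1 h', h⟩, h'⟩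
    rw [h2, integral_Icc_eq_integral_Ioc]
  rw [step1, MeasureTheory.integral_integral_swap hFi, step3]

theorem tri_swap' {f : ℝ → ℝ → ℝ} (hf : Continuous fun p : ℝ × ℝ => f p.1 p.2)
    {a c : ℝ} (hac : a ≤ c) :
    ∫ β in a..c, ∫ t in β..c, f β t = ∫ t in a..c, ∫ β in a..t, f β t :=
  (tri_swap (f := fun s t => f t s) (hf.comp (continuous_snd.prodMk continuous_fst)) hac).symm

section reorg
variable {G : ℝ → ℝ → ℝ → ℝ} (hG : Continuous fun p : ℝ × ℝ × ℝ => G p.1 p.2.1 p.2.2)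
  {L : ℝ} (hL : 0 ≤ L)
include hG hL

theorem reorgA :
    ∫ β in (0:ℝ)..L, ∫ t in (0:ℝ)..β, ∫ θ in (0:ℝ)..t, G β t θ
      = ∫ t in (0:ℝ)..L, ∫ θ in (0:ℝ)..t, ∫ β in t..L, G β t θ := by
  rw [tri_swap (f := fun β t => ∫ θ in (0:ℝ)..t, G β t θ)
    (cont_param (f := fun (p : ℝ × ℝ) θ => G p.1 p.2 θ)
      (hG.comp (by fun_prop : Continuous fun r : (ℝ × ℝ) × ℝ => (r.1.1, r.1.2, r.2)))
      continuous_const continuous_snd) hL]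
  refine intervalIntegral.integral_congr fun t ht => ?_
  rw [Set.uIcc_of_le hL] at ht
  exact rect_swap (f := fun β θ => G β t θ)
    (hG.comp (by fun_prop : Continuous fun r : ℝ × ℝ => (r.1, t, r.2))) ht.2 ht.1

theorem reorgB :
    ∫ β in (0:ℝ)..L, ∫ t in (0:ℝ)..β, ∫ θ in t..β, G β t θ
      = ∫ t in (0:ℝ)..L, ∫ θ in t..L, ∫ β in θ..L, G β t θ := by
  rw [tri_swap (f := fun β t => ∫ θ in t..β, G β t θ)
    (cont_param (f := fun (p : ℝ × ℝ) θ => G p.1 p.2 θ)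
      (hG.comp (by fun_prop : Continuous fun r : (ℝ × ℝ) × ℝ => (r.1.1, r.1.2, r.2)))
      continuous_snd continuous_fst) hL]
  refine intervalIntegral.integral_congr fun t ht => ?_
  rw [Set.uIcc_of_le hL] at ht
  exact tri_swap (f := fun β θ => G β t θ)
    (hG.comp (by fun_prop : Continuous fun r : ℝ × ℝ => (r.1, t, r.2))) ht.2

theorem reorgC :
    ∫ β in (0:ℝ)..L, ∫ t in (0:ℝ)..β, ∫ θ in β..L, G β t θ
      = ∫ t in (0:ℝ)..L, ∫ θ in t..L, ∫ β in t..θ, G β t θ := by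
  rw [tri_swap (f := fun β t => ∫ θ in β..L, G β t θ)
    (cont_param (f := fun (p : ℝ × ℝ) θ => G p.1 p.2 θ)
      (hG.comp (by fun_prop : Continuous fun r : (ℝ × ℝ) × ℝ => (r.1.1, r.1.2, r.2)))
      continuous_fst continuous_const) hL]
  refine intervalIntegral.integral_congr fun t ht => ?_
  rw [Set.uIcc_of_le hL] at ht
  exact tri_swap' (f := fun β θ => G β t θ)
    (hG.comp (by fun_prop : Continuous fun r : ℝ × ℝ => (r.1, t, r.2))) ht.2

theorem reorgD :
    ∫ β in (0:ℝ)..L, ∫ t in β..L, ∫ θ in (0:ℝ)..β, G β t θ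
      = ∫ t in (0:ℝ)..L, ∫ θ in (0:ℝ)..t, ∫ β in θ..t, G β t θ := by
  rw [tri_swap' (f := fun β t => ∫ θ in (0:ℝ)..β, G β t θ)
    (cont_param (f := fun (p : ℝ × ℝ) θ => G p.1 p.2 θ)
      (hG.comp (by fun_prop : Continuous fun r : (ℝ × ℝ) × ℝ => (r.1.1, r.1.2, r.2)))
      continuous_const continuous_fst) hL]
  refine intervalIntegral.integral_congr fun t ht => ?_
  rw [Set.uIcc_of_le hL] at ht
  exact tri_swap (f := fun β θ => G β t θ)
    (hG.comp (by fun_prop : Continuous fun r : ℝ × ℝ => (r.1, t, r.2))) ht.1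

theorem reorgE :
    ∫ β in (0:ℝ)..L, ∫ t in β..L, ∫ θ in β..t, G β t θ
      = ∫ t in (0:ℝ)..L, ∫ θ in (0:ℝ)..t, ∫ β in (0:ℝ)..θ, G β t θ := by
  rw [tri_swap' (f := fun β t => ∫ θ in β..t, G β t θ)
    (cont_param (f := fun (p : ℝ × ℝ) θ => G p.1 p.2 θ)
      (hG.comp (by fun_prop : Continuous fun r : (ℝ × ℝ) × ℝ => (r.1.1, r.1.2, r.2)))
      continuous_fst continuous_snd) hL]
  refine intervalIntegral.integral_congr fun t ht => ?_
  rw [Set.uIcc_of_le hL] at ht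
  exact tri_swap' (f := fun β θ => G β t θ)
    (hG.comp (by fun_prop : Continuous fun r : ℝ × ℝ => (r.1, t, r.2))) ht.1

theorem reorgF :
    ∫ β in (0:ℝ)..L, ∫ t in β..L, ∫ θ in t..L, G β t θ
      = ∫ t in (0:ℝ)..L, ∫ θ in t..L, ∫ β in (0:ℝ)..t, G β t θ := by
  rw [tri_swap' (f := fun β t => ∫ θ in t..L, G β t θ)
    (cont_param (f := fun (p : ℝ × ℝ) θ => G p.1 p.2 θ)
      (hG.comp (by fun_prop : Continuous fun r : (ℝ × ℝ) × ℝ => (r.1.1, r.1.2, r.2)))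
      continuous_snd continuous_const) hL]
  refine intervalIntegral.integral_congr fun t ht => ?_
  rw [Set.uIcc_of_le hL] at ht
  exact rect_swap (f := fun β θ => G β t θ)
    (hG.comp (by fun_prop : Continuous fun r : ℝ × ℝ => (r.1, t, r.2))) ht.1 ht.2

end reorg

section core
variable {n d d₂ : ℕ}

def wf (Z : ℝ → ℝ → Matrix (Fin d₂) (Fin n) ℝ) (x2 : ℝ → Fin n → ℝ)
    (V : Matrix (Fin d) (Fin d₂) ℝ) (β t : ℝ) : Fin d → ℝ := (V * Z β t) *ᵥ x2 t

variable {L : ℝ} {Z : ℝ → ℝ → Matrix (Fin d₂) (Fin n) ℝ} {x2 : ℝ → Fin n → ℝ}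

lemma wf_cont (hZ : Continuous fun p : ℝ × ℝ => Z p.1 p.2) (hx2 : Continuous x2)
    (V : Matrix (Fin d) (Fin d₂) ℝ) :
    Continuous fun p : ℝ × ℝ => wf Z x2 V p.1 p.2 :=
  (continuous_const.matrix_mul hZ).matrix_mulVec (hx2.comp continuous_snd)

lemma K_cont (hZ : Continuous fun p : ℝ × ℝ => Z p.1 p.2) (hx2 : Continuous x2)
    (V W : Matrix (Fin d) (Fin d₂) ℝ) :
    Continuous fun p : ℝ × ℝ × ℝ => wf Z x2 V p.1 p.2.1 ⬝ᵥ wf Z x2 W p.1 p.2.2 :=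
  ((wf_cont hZ hx2 V).comp
      ((by fun_prop : Continuous fun p : ℝ × ℝ × ℝ => (p.1, p.2.1)))).dotProduct
    ((wf_cont hZ hx2 W).comp (by fun_prop : Continuous fun p : ℝ × ℝ × ℝ => (p.1, p.2.2)))

lemma matform (hZ : Continuous fun p : ℝ × ℝ => Z p.1 p.2) (hx2 : Continuous x2)
    (V W : Matrix (Fin d) (Fin d₂) ℝ) (a b s θ : ℝ) :
    (∫ β in a..b, wf Z x2 V β s ⬝ᵥ wf Z x2 W β θ)
      = x2 s ⬝ᵥ ((∫ β in a..b, (Z β s)ᵀ * (Vᵀ * W) * Z β θ) *ᵥ x2 θ) := by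
  have hcm : Continuous fun β => (Z β s)ᵀ * (Vᵀ * W) * Z β θ :=
    (((hZ.comp (continuous_id.prodMk continuous_const)).matrix_transpose.matrix_mul
      continuous_const).matrix_mul (hZ.comp (continuous_id.prodMk continuous_const)))
  rw [dot_mv_integral _ _ (hcm.intervalIntegrable a b)]
  refine intervalIntegral.integral_congr fun β _ => ?_
  show wf Z x2 V β s ⬝ᵥ wf Z x2 W β θ = _
  rw [wf, wf, mv_dot_mv]
  congr 1
  simp only [Matrix.transpose_mul, Matrix.mul_assoc]
end core

section quad
variable {n d d₂ : ℕ} {L : ℝ} {Z : ℝ → ℝ → Matrix (Fin d₂) (Fin n) ℝ} {x2 : ℝ → Fin n → ℝ}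

set_option maxHeartbeats 1000000 in
/-- The `B ⬝ B` term. -/
theorem lemBB (hL : 0 ≤ L) (hZ : Continuous fun p : ℝ × ℝ => Z p.1 p.2)
    (hx2 : Continuous x2) (U2 : Matrix (Fin d) (Fin d₂) ℝ) :
    (∫ s in (0:ℝ)..L, (∫ t in (0:ℝ)..s, wf Z x2 U2 s t) ⬝ᵥ ∫ θ in (0:ℝ)..s, wf Z x2 U2 s θ)
      = (∫ s in (0:ℝ)..L, ∫ θ in (0:ℝ)..s,
          x2 s ⬝ᵥ ((∫ β in s..L, (Z β s)ᵀ * (U2ᵀ * U2) * Z β θ) *ᵥ x2 θ))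
        + ∫ s in (0:ℝ)..L, ∫ θ in s..L,
          x2 s ⬝ᵥ ((∫ β in θ..L, (Z β s)ᵀ * (U2ᵀ * U2) * Z β θ) *ᵥ x2 θ) := by
  have hw2 := wf_cont hZ hx2 U2
  have hK22 := K_cont hZ hx2 U2 U2
  have hprK22 : Continuous fun q : (ℝ × ℝ) × ℝ =>
      wf Z x2 U2 q.1.1 q.1.2 ⬝ᵥ wf Z x2 U2 q.1.1 q.2 :=
    ((wf_cont hZ hx2 U2).comp
        (show Continuous fun q : (ℝ × ℝ) × ℝ => (q.1.1, q.1.2) by fun_prop)).dotProduct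
      ((wf_cont hZ hx2 U2).comp
        (show Continuous fun q : (ℝ × ℝ) × ℝ => (q.1.1, q.2) by fun_prop))
  have iiw2 : ∀ β u v : ℝ, IntervalIntegrable (fun t => wf Z x2 U2 β t) volume u v :=
    fun β u v => (hw2.comp (continuous_const.prodMk continuous_id)).intervalIntegrable u v
  have h1 : ∀ β : ℝ, (∫ t in (0:ℝ)..β, wf Z x2 U2 β t) ⬝ᵥ (∫ θ in (0:ℝ)..β, wf Z x2 U2 β θ)
      = (∫ t in (0:ℝ)..β, ∫ θ in (0:ℝ)..t, wf Z x2 U2 β t ⬝ᵥ wf Z x2 U2 β θ)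
        + ∫ t in (0:ℝ)..β, ∫ θ in t..β, wf Z x2 U2 β t ⬝ᵥ wf Z x2 U2 β θ := by
    intro β
    have jointc : Continuous fun p : ℝ × ℝ => wf Z x2 U2 β p.1 ⬝ᵥ wf Z x2 U2 β p.2 :=
      ((wf_cont hZ hx2 U2).comp
          (show Continuous fun p : ℝ × ℝ => ((β, p.1) : ℝ × ℝ) by fun_prop)).dotProduct
        ((wf_cont hZ hx2 U2).comp
          (show Continuous fun p : ℝ × ℝ => ((β, p.2) : ℝ × ℝ) by fun_prop))
    have ia : IntervalIntegrable
        (fun t => ∫ θ in (0:ℝ)..t, wf Z x2 U2 β t ⬝ᵥ wf Z x2 U2 β θ) volume 0 β :=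
      (cont_param (f := fun t θ => wf Z x2 U2 β t ⬝ᵥ wf Z x2 U2 β θ) jointc
        continuous_const continuous_id).intervalIntegrable 0 β
    have ib : IntervalIntegrable
        (fun t => ∫ θ in t..β, wf Z x2 U2 β t ⬝ᵥ wf Z x2 U2 β θ) volume 0 β :=
      (cont_param (f := fun t θ => wf Z x2 U2 β t ⬝ᵥ wf Z x2 U2 β θ) jointc
        continuous_id continuous_const).intervalIntegrable 0 β
    rw [integral_dot (∫ θ in (0:ℝ)..β, wf Z x2 U2 β θ) (f := fun t => wf Z x2 U2 β t)
      (iiw2 β 0 β)]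
    rw [intervalIntegral.integral_congr (g := fun t =>
        ∫ θ in (0:ℝ)..β, wf Z x2 U2 β t ⬝ᵥ wf Z x2 U2 β θ)
      (fun t _ => dot_integral (wf Z x2 U2 β t) (f := fun θ => wf Z x2 U2 β θ) (iiw2 β 0 β))]
    rw [← intervalIntegral.integral_add ia ib]
    refine intervalIntegral.integral_congr fun t _ => ?_
    exact (intervalIntegral.integral_add_adjacent_intervals
      ((jointc.comp (continuous_const.prodMk continuous_id)).intervalIntegrable 0 t)
      ((jointc.comp (continuous_const.prodMk continuous_id)).intervalIntegrable t β)).symm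
  have oa : IntervalIntegrable (fun β => ∫ t in (0:ℝ)..β, ∫ θ in (0:ℝ)..t,
      wf Z x2 U2 β t ⬝ᵥ wf Z x2 U2 β θ) volume 0 L :=
    (cont_param (f := fun β t => ∫ θ in (0:ℝ)..t, wf Z x2 U2 β t ⬝ᵥ wf Z x2 U2 β θ)
      (cont_param (f := fun (p : ℝ × ℝ) θ => wf Z x2 U2 p.1 p.2 ⬝ᵥ wf Z x2 U2 p.1 θ)
        hprK22 continuous_const continuous_snd)
      continuous_const continuous_id).intervalIntegrable 0 L
  have ob : IntervalIntegrable (fun β => ∫ t in (0:ℝ)..β, ∫ θ in t..β,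
      wf Z x2 U2 β t ⬝ᵥ wf Z x2 U2 β θ) volume 0 L :=
    (cont_param (f := fun β t => ∫ θ in t..β, wf Z x2 U2 β t ⬝ᵥ wf Z x2 U2 β θ)
      (cont_param (f := fun (p : ℝ × ℝ) θ => wf Z x2 U2 p.1 p.2 ⬝ᵥ wf Z x2 U2 p.1 θ)
        hprK22 continuous_snd continuous_fst)
      continuous_const continuous_id).intervalIntegrable 0 L
  rw [intervalIntegral.integral_congr (fun β _ => h1 β),
    intervalIntegral.integral_add oa ob]
  rw [reorgA (G := fun β t θ => wf Z x2 U2 β t ⬝ᵥ wf Z x2 U2 β θ) hK22 hL,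
    reorgB (G := fun β t θ => wf Z x2 U2 β t ⬝ᵥ wf Z x2 U2 β θ) hK22 hL]
  congr 1
  · exact intervalIntegral.integral_congr fun t _ =>
      intervalIntegral.integral_congr fun θ _ => matform hZ hx2 U2 U2 t L t θ
  · exact intervalIntegral.integral_congr fun t _ =>
      intervalIntegral.integral_congr fun θ _ => matform hZ hx2 U2 U2 θ L t θ
end quad

section quad2
variable {n m d d₂ : ℕ} {L : ℝ} {Z : ℝ → ℝ → Matrix (Fin d₂) (Fin n) ℝ} {x2 : ℝ → Fin n → ℝ}

set_option maxHeartbeats 1000000 in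
/-- The `B ⬝ C` term. -/
theorem lemBC (hL : 0 ≤ L) (hZ : Continuous fun p : ℝ × ℝ => Z p.1 p.2)
    (hx2 : Continuous x2) (U2 U3 : Matrix (Fin d) (Fin d₂) ℝ) :
    (∫ s in (0:ℝ)..L, (∫ t in (0:ℝ)..s, wf Z x2 U2 s t) ⬝ᵥ ∫ θ in s..L, wf Z x2 U3 s θ)
      = ∫ s in (0:ℝ)..L, ∫ θ in s..L,
          x2 s ⬝ᵥ ((∫ β in s..θ, (Z β s)ᵀ * (U2ᵀ * U3) * Z β θ) *ᵥ x2 θ) := by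
  have hw2 := wf_cont hZ hx2 U2
  have hw3 := wf_cont hZ hx2 U3
  have hK23 := K_cont hZ hx2 U2 U3
  have h1 : ∀ β : ℝ, (∫ t in (0:ℝ)..β, wf Z x2 U2 β t) ⬝ᵥ (∫ θ in β..L, wf Z x2 U3 β θ)
      = ∫ t in (0:ℝ)..β, ∫ θ in β..L, wf Z x2 U2 β t ⬝ᵥ wf Z x2 U3 β θ := by
    intro β
    rw [integral_dot (∫ θ in β..L, wf Z x2 U3 β θ) (f := fun t => wf Z x2 U2 β t)
      ((hw2.comp (continuous_const.prodMk continuous_id)).intervalIntegrable 0 β)]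
    exact intervalIntegral.integral_congr fun t _ =>
      dot_integral (wf Z x2 U2 β t) (f := fun θ => wf Z x2 U3 β θ)
        ((hw3.comp (continuous_const.prodMk continuous_id)).intervalIntegrable β L)
  rw [intervalIntegral.integral_congr (fun β _ => h1 β),
    reorgC (G := fun β t θ => wf Z x2 U2 β t ⬝ᵥ wf Z x2 U3 β θ) hK23 hL]
  exact intervalIntegral.integral_congr fun t _ =>
    intervalIntegral.integral_congr fun θ _ => matform hZ hx2 U2 U3 t θ t θ

set_option maxHeartbeats 1000000 in
/-- The `C ⬝ B` term. -/
theorem lemCB (hL : 0 ≤ L) (hZ : Continuous fun p : ℝ × ℝ => Z p.1 p.2)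
    (hx2 : Continuous x2) (U2 U3 : Matrix (Fin d) (Fin d₂) ℝ) :
    (∫ s in (0:ℝ)..L, (∫ t in s..L, wf Z x2 U3 s t) ⬝ᵥ ∫ θ in (0:ℝ)..s, wf Z x2 U2 s θ)
      = ∫ s in (0:ℝ)..L, ∫ θ in (0:ℝ)..s,
          x2 s ⬝ᵥ ((∫ β in θ..s, (Z β s)ᵀ * (U3ᵀ * U2) * Z β θ) *ᵥ x2 θ) := by
  have hw2 := wf_cont hZ hx2 U2
  have hw3 := wf_cont hZ hx2 U3
  have hK32 := K_cont hZ hx2 U3 U2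
  have h1 : ∀ β : ℝ, (∫ t in β..L, wf Z x2 U3 β t) ⬝ᵥ (∫ θ in (0:ℝ)..β, wf Z x2 U2 β θ)
      = ∫ t in β..L, ∫ θ in (0:ℝ)..β, wf Z x2 U3 β t ⬝ᵥ wf Z x2 U2 β θ := by
    intro β
    rw [integral_dot (∫ θ in (0:ℝ)..β, wf Z x2 U2 β θ) (f := fun t => wf Z x2 U3 β t)
      ((hw3.comp (continuous_const.prodMk continuous_id)).intervalIntegrable β L)]
    exact intervalIntegral.integral_congr fun t _ =>
      dot_integral (wf Z x2 U3 β t) (f := fun θ => wf Z x2 U2 β θ)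
        ((hw2.comp (continuous_const.prodMk continuous_id)).intervalIntegrable 0 β)
  rw [intervalIntegral.integral_congr (fun β _ => h1 β),
    reorgD (G := fun β t θ => wf Z x2 U3 β t ⬝ᵥ wf Z x2 U2 β θ) hK32 hL]
  exact intervalIntegral.integral_congr fun t _ =>
    intervalIntegral.integral_congr fun θ _ => matform hZ hx2 U3 U2 θ t t θ

set_option maxHeartbeats 1500000 in
/-- The `C ⬝ C` term. -/
theorem lemCC (hL : 0 ≤ L) (hZ : Continuous fun p : ℝ × ℝ => Z p.1 p.2)
    (hx2 : Continuous x2) (U3 : Matrix (Fin d) (Fin d₂) ℝ) :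
    (∫ s in (0:ℝ)..L, (∫ t in s..L, wf Z x2 U3 s t) ⬝ᵥ ∫ θ in s..L, wf Z x2 U3 s θ)
      = (∫ s in (0:ℝ)..L, ∫ θ in (0:ℝ)..s,
          x2 s ⬝ᵥ ((∫ β in (0:ℝ)..θ, (Z β s)ᵀ * (U3ᵀ * U3) * Z β θ) *ᵥ x2 θ))
        + ∫ s in (0:ℝ)..L, ∫ θ in s..L,
          x2 s ⬝ᵥ ((∫ β in (0:ℝ)..s, (Z β s)ᵀ * (U3ᵀ * U3) * Z β θ) *ᵥ x2 θ) := by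
  have hw3 := wf_cont hZ hx2 U3
  have hK33 := K_cont hZ hx2 U3 U3
  have hprK33 : Continuous fun q : (ℝ × ℝ) × ℝ =>
      wf Z x2 U3 q.1.1 q.1.2 ⬝ᵥ wf Z x2 U3 q.1.1 q.2 :=
    ((wf_cont hZ hx2 U3).comp
        (show Continuous fun q : (ℝ × ℝ) × ℝ => (q.1.1, q.1.2) by fun_prop)).dotProduct
      ((wf_cont hZ hx2 U3).comp
        (show Continuous fun q : (ℝ × ℝ) × ℝ => (q.1.1, q.2) by fun_prop))
  have iiw3 : ∀ β u v : ℝ, IntervalIntegrable (fun t => wf Z x2 U3 β t) volume u v :=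
    fun β u v => (hw3.comp (continuous_const.prodMk continuous_id)).intervalIntegrable u v
  have h1 : ∀ β : ℝ, (∫ t in β..L, wf Z x2 U3 β t) ⬝ᵥ (∫ θ in β..L, wf Z x2 U3 β θ)
      = (∫ t in β..L, ∫ θ in β..t, wf Z x2 U3 β t ⬝ᵥ wf Z x2 U3 β θ)
        + ∫ t in β..L, ∫ θ in t..L, wf Z x2 U3 β t ⬝ᵥ wf Z x2 U3 β θ := by
    intro β
    have jointc : Continuous fun p : ℝ × ℝ => wf Z x2 U3 β p.1 ⬝ᵥ wf Z x2 U3 β p.2 :=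
      ((wf_cont hZ hx2 U3).comp
          (show Continuous fun p : ℝ × ℝ => ((β, p.1) : ℝ × ℝ) by fun_prop)).dotProduct
        ((wf_cont hZ hx2 U3).comp
          (show Continuous fun p : ℝ × ℝ => ((β, p.2) : ℝ × ℝ) by fun_prop))
    have ia : IntervalIntegrable
        (fun t => ∫ θ in β..t, wf Z x2 U3 β t ⬝ᵥ wf Z x2 U3 β θ) volume β L :=
      (cont_param (f := fun t θ => wf Z x2 U3 β t ⬝ᵥ wf Z x2 U3 β θ) jointc
        continuous_const continuous_id).intervalIntegrable β L
    have ib : IntervalIntegrable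
        (fun t => ∫ θ in t..L, wf Z x2 U3 β t ⬝ᵥ wf Z x2 U3 β θ) volume β L :=
      (cont_param (f := fun t θ => wf Z x2 U3 β t ⬝ᵥ wf Z x2 U3 β θ) jointc
        continuous_id continuous_const).intervalIntegrable β L
    rw [integral_dot (∫ θ in β..L, wf Z x2 U3 β θ) (f := fun t => wf Z x2 U3 β t) (iiw3 β β L)]
    rw [intervalIntegral.integral_congr (g := fun t =>
        ∫ θ in β..L, wf Z x2 U3 β t ⬝ᵥ wf Z x2 U3 β θ)
      (fun t _ => dot_integral (wf Z x2 U3 β t) (f := fun θ => wf Z x2 U3 β θ) (iiw3 β β L))]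
    rw [← intervalIntegral.integral_add ia ib]
    refine intervalIntegral.integral_congr fun t _ => ?_
    exact (intervalIntegral.integral_add_adjacent_intervals
      ((jointc.comp (continuous_const.prodMk continuous_id)).intervalIntegrable β t)
      ((jointc.comp (continuous_const.prodMk continuous_id)).intervalIntegrable t L)).symm
  have oa : IntervalIntegrable (fun β => ∫ t in β..L, ∫ θ in β..t,
      wf Z x2 U3 β t ⬝ᵥ wf Z x2 U3 β θ) volume 0 L :=
    (cont_param (f := fun β t => ∫ θ in β..t, wf Z x2 U3 β t ⬝ᵥ wf Z x2 U3 β θ)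
      (cont_param (f := fun (p : ℝ × ℝ) θ => wf Z x2 U3 p.1 p.2 ⬝ᵥ wf Z x2 U3 p.1 θ)
        hprK33 continuous_fst continuous_snd)
      continuous_id continuous_const).intervalIntegrable 0 L
  have ob : IntervalIntegrable (fun β => ∫ t in β..L, ∫ θ in t..L,
      wf Z x2 U3 β t ⬝ᵥ wf Z x2 U3 β θ) volume 0 L :=
    (cont_param (f := fun β t => ∫ θ in t..L, wf Z x2 U3 β t ⬝ᵥ wf Z x2 U3 β θ)
      (cont_param (f := fun (p : ℝ × ℝ) θ => wf Z x2 U3 p.1 p.2 ⬝ᵥ wf Z x2 U3 p.1 θ)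
        hprK33 continuous_snd continuous_const)
      continuous_id continuous_const).intervalIntegrable 0 L
  rw [intervalIntegral.integral_congr (fun β _ => h1 β),
    intervalIntegral.integral_add oa ob]
  rw [reorgE (G := fun β t θ => wf Z x2 U3 β t ⬝ᵥ wf Z x2 U3 β θ) hK33 hL,
    reorgF (G := fun β t θ => wf Z x2 U3 β t ⬝ᵥ wf Z x2 U3 β θ) hK33 hL]
  congr 1
  · exact intervalIntegral.integral_congr fun t _ =>
      intervalIntegral.integral_congr fun θ _ => matform hZ hx2 U3 U3 0 θ t θ
  · exact intervalIntegral.integral_congr fun t _ =>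
      intervalIntegral.integral_congr fun θ _ => matform hZ hx2 U3 U3 0 t t θ
end quad2

section crossterms
variable {n m d d₂ : ℕ} {L : ℝ} {Z : ℝ → ℝ → Matrix (Fin d₂) (Fin n) ℝ} {x2 : ℝ → Fin n → ℝ}

set_option maxHeartbeats 1000000 in
theorem lemAB (hL : 0 ≤ L) (hZ : Continuous fun p : ℝ × ℝ => Z p.1 p.2)
    (hx2 : Continuous x2) (U1 : Matrix (Fin d) (Fin m) ℝ) (V : Matrix (Fin d) (Fin d₂) ℝ)
    (x1 : Fin m → ℝ) :
    (∫ s in (0:ℝ)..L, (U1 *ᵥ x1) ⬝ᵥ ∫ θ in (0:ℝ)..s, wf Z x2 V s θ)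
      = ∫ θ in (0:ℝ)..L, x1 ⬝ᵥ ((∫ s in θ..L, (U1ᵀ * V) * Z s θ) *ᵥ x2 θ) := by
  have hwV := wf_cont hZ hx2 V
  have hq : Continuous fun p : ℝ × ℝ => x1 ⬝ᵥ (((U1ᵀ * V) * Z p.1 p.2) *ᵥ x2 p.2) :=
    continuous_const.dotProduct
      ((continuous_const.matrix_mul hZ).matrix_mulVec (hx2.comp continuous_snd))
  have h1 : ∀ s : ℝ, ((U1 *ᵥ x1) ⬝ᵥ ∫ θ in (0:ℝ)..s, wf Z x2 V s θ)
      = ∫ θ in (0:ℝ)..s, x1 ⬝ᵥ (((U1ᵀ * V) * Z s θ) *ᵥ x2 θ) := by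
    intro s
    rw [dot_integral (U1 *ᵥ x1) (f := fun θ => wf Z x2 V s θ)
      ((hwV.comp (continuous_const.prodMk continuous_id)).intervalIntegrable 0 s)]
    refine intervalIntegral.integral_congr fun θ _ => ?_
    show (U1 *ᵥ x1) ⬝ᵥ ((V * Z s θ) *ᵥ x2 θ) = _
    rw [mv_dot_mv, ← Matrix.mul_assoc]
  rw [intervalIntegral.integral_congr (fun s _ => h1 s),
    tri_swap (f := fun s θ => x1 ⬝ᵥ (((U1ᵀ * V) * Z s θ) *ᵥ x2 θ)) hq hL]
  refine intervalIntegral.integral_congr fun θ _ => ?_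
  exact (dot_mv_integral x1 (x2 θ)
    ((continuous_const.matrix_mul
      (hZ.comp (continuous_id.prodMk continuous_const))).intervalIntegrable θ L)).symm

set_option maxHeartbeats 1000000 in
theorem lemAC (hL : 0 ≤ L) (hZ : Continuous fun p : ℝ × ℝ => Z p.1 p.2)
    (hx2 : Continuous x2) (U1 : Matrix (Fin d) (Fin m) ℝ) (V : Matrix (Fin d) (Fin d₂) ℝ)
    (x1 : Fin m → ℝ) :
    (∫ s in (0:ℝ)..L, (U1 *ᵥ x1) ⬝ᵥ ∫ θ in s..L, wf Z x2 V s θ)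
      = ∫ θ in (0:ℝ)..L, x1 ⬝ᵥ ((∫ s in (0:ℝ)..θ, (U1ᵀ * V) * Z s θ) *ᵥ x2 θ) := by
  have hwV := wf_cont hZ hx2 V
  have hq : Continuous fun p : ℝ × ℝ => x1 ⬝ᵥ (((U1ᵀ * V) * Z p.1 p.2) *ᵥ x2 p.2) :=
    continuous_const.dotProduct
      ((continuous_const.matrix_mul hZ).matrix_mulVec (hx2.comp continuous_snd))
  have h1 : ∀ s : ℝ, ((U1 *ᵥ x1) ⬝ᵥ ∫ θ in s..L, wf Z x2 V s θ)
      = ∫ θ in s..L, x1 ⬝ᵥ (((U1ᵀ * V) * Z s θ) *ᵥ x2 θ) := by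
    intro s
    rw [dot_integral (U1 *ᵥ x1) (f := fun θ => wf Z x2 V s θ)
      ((hwV.comp (continuous_const.prodMk continuous_id)).intervalIntegrable s L)]
    refine intervalIntegral.integral_congr fun θ _ => ?_
    show (U1 *ᵥ x1) ⬝ᵥ ((V * Z s θ) *ᵥ x2 θ) = _
    rw [mv_dot_mv, ← Matrix.mul_assoc]
  rw [intervalIntegral.integral_congr (fun s _ => h1 s),
    tri_swap' (f := fun s θ => x1 ⬝ᵥ (((U1ᵀ * V) * Z s θ) *ᵥ x2 θ)) hq hL]
  refine intervalIntegral.integral_congr fun θ _ => ?_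
  exact (dot_mv_integral x1 (x2 θ)
    ((continuous_const.matrix_mul
      (hZ.comp (continuous_id.prodMk continuous_const))).intervalIntegrable 0 θ)).symm

set_option maxHeartbeats 1000000 in
theorem combine3 {M1 M2 M3 : ℝ → ℝ → Matrix (Fin n) (Fin n) ℝ}
    (hM1 : Continuous fun p : ℝ × ℝ => M1 p.1 p.2)
    (hM2 : Continuous fun p : ℝ × ℝ => M2 p.1 p.2)
    (hM3 : Continuous fun p : ℝ × ℝ => M3 p.1 p.2)
    (hx2 : Continuous x2) {u v : ℝ → ℝ} (hu : Continuous u) (hv : Continuous v) :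
    (∫ s in (0:ℝ)..L, ∫ θ in u s..v s, x2 s ⬝ᵥ (M1 s θ *ᵥ x2 θ))
      + (∫ s in (0:ℝ)..L, ∫ θ in u s..v s, x2 s ⬝ᵥ (M2 s θ *ᵥ x2 θ))
      + (∫ s in (0:ℝ)..L, ∫ θ in u s..v s, x2 s ⬝ᵥ (M3 s θ *ᵥ x2 θ))
      = ∫ s in (0:ℝ)..L, ∫ θ in u s..v s,
          x2 s ⬝ᵥ ((M1 s θ + M2 s θ + M3 s θ) *ᵥ x2 θ) := by
  have c1 : Continuous fun p : ℝ × ℝ => x2 p.1 ⬝ᵥ (M1 p.1 p.2 *ᵥ x2 p.2) :=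
    (hx2.comp continuous_fst).dotProduct (hM1.matrix_mulVec (hx2.comp continuous_snd))
  have c2 : Continuous fun p : ℝ × ℝ => x2 p.1 ⬝ᵥ (M2 p.1 p.2 *ᵥ x2 p.2) :=
    (hx2.comp continuous_fst).dotProduct (hM2.matrix_mulVec (hx2.comp continuous_snd))
  have c3 : Continuous fun p : ℝ × ℝ => x2 p.1 ⬝ᵥ (M3 p.1 p.2 *ᵥ x2 p.2) :=
    (hx2.comp continuous_fst).dotProduct (hM3.matrix_mulVec (hx2.comp continuous_snd))
  have o1 : IntervalIntegrable (fun s => ∫ θ in u s..v s, x2 s ⬝ᵥ (M1 s θ *ᵥ x2 θ)) volume 0 L :=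
    (cont_param (f := fun s θ => x2 s ⬝ᵥ (M1 s θ *ᵥ x2 θ)) c1 hu hv).intervalIntegrable 0 L
  have o2 : IntervalIntegrable (fun s => ∫ θ in u s..v s, x2 s ⬝ᵥ (M2 s θ *ᵥ x2 θ)) volume 0 L :=
    (cont_param (f := fun s θ => x2 s ⬝ᵥ (M2 s θ *ᵥ x2 θ)) c2 hu hv).intervalIntegrable 0 L
  have o3 : IntervalIntegrable (fun s => ∫ θ in u s..v s, x2 s ⬝ᵥ (M3 s θ *ᵥ x2 θ)) volume 0 L :=
    (cont_param (f := fun s θ => x2 s ⬝ᵥ (M3 s θ *ᵥ x2 θ)) c3 hu hv).intervalIntegrable 0 L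
  rw [← intervalIntegral.integral_add o1 o2, ← intervalIntegral.integral_add (o1.add o2) o3]
  refine intervalIntegral.integral_congr fun s _ => ?_
  have i1 : IntervalIntegrable (fun θ => x2 s ⬝ᵥ (M1 s θ *ᵥ x2 θ)) volume (u s) (v s) :=
    ((c1.comp (continuous_const.prodMk continuous_id)).intervalIntegrable _ _)
  have i2 : IntervalIntegrable (fun θ => x2 s ⬝ᵥ (M2 s θ *ᵥ x2 θ)) volume (u s) (v s) :=
    ((c2.comp (continuous_const.prodMk continuous_id)).intervalIntegrable _ _)
  have i3 : IntervalIntegrable (fun θ => x2 s ⬝ᵥ (M3 s θ *ᵥ x2 θ)) volume (u s) (v s) :=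
    ((c3.comp (continuous_const.prodMk continuous_id)).intervalIntegrable _ _)
  rw [← intervalIntegral.integral_add i1 i2, ← intervalIntegral.integral_add (i1.add i2) i3]
  refine intervalIntegral.integral_congr fun θ _ => ?_
  simp [Matrix.add_mulVec, dotProduct_add]
end crossterms

section corethm
variable {n m d d₂ : ℕ} {L : ℝ} {Z : ℝ → ℝ → Matrix (Fin d₂) (Fin n) ℝ} {x2 : ℝ → Fin n → ℝ}

set_option maxHeartbeats 2000000 in
theorem core (hL : 0 ≤ L) (hZ : Continuous fun p : ℝ × ℝ => Z p.1 p.2) (hx2 : Continuous x2)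
    (U1 : Matrix (Fin d) (Fin m) ℝ) (U2 U3 : Matrix (Fin d) (Fin d₂) ℝ) (x1 : Fin m → ℝ) :
    (∫ s in (0:ℝ)..L,
      (U1 *ᵥ x1 + (∫ θ in (0:ℝ)..s, wf Z x2 U2 s θ) + ∫ θ in s..L, wf Z x2 U3 s θ) ⬝ᵥ
      (U1 *ᵥ x1 + (∫ θ in (0:ℝ)..s, wf Z x2 U2 s θ) + ∫ θ in s..L, wf Z x2 U3 s θ))
    = L * (x1 ⬝ᵥ ((U1ᵀ * U1) *ᵥ x1))
      + 2 * (x1 ⬝ᵥ ∫ θ in (0:ℝ)..L,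
          ((∫ s in θ..L, (U1ᵀ * U2) * Z s θ) + ∫ s in (0:ℝ)..θ, (U1ᵀ * U3) * Z s θ) *ᵥ x2 θ)
      + (∫ s in (0:ℝ)..L, ∫ θ in (0:ℝ)..s, x2 s ⬝ᵥ
          (((∫ β in s..L, (Z β s)ᵀ * (U2ᵀ * U2) * Z β θ)
            + (∫ β in θ..s, (Z β s)ᵀ * (U3ᵀ * U2) * Z β θ)
            + ∫ β in (0:ℝ)..θ, (Z β s)ᵀ * (U3ᵀ * U3) * Z β θ) *ᵥ x2 θ))
      + ∫ s in (0:ℝ)..L, ∫ θ in s..L, x2 s ⬝ᵥ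
          (((∫ β in θ..L, (Z β s)ᵀ * (U2ᵀ * U2) * Z β θ)
            + (∫ β in s..θ, (Z β s)ᵀ * (U2ᵀ * U3) * Z β θ)
            + ∫ β in (0:ℝ)..s, (Z β s)ᵀ * (U3ᵀ * U3) * Z β θ) *ᵥ x2 θ) := by
  have hw2 := wf_cont hZ hx2 U2
  have hw3 := wf_cont hZ hx2 U3
  set a : Fin d → ℝ := U1 *ᵥ x1 with ha
  set B : ℝ → Fin d → ℝ := fun s => ∫ θ in (0:ℝ)..s, wf Z x2 U2 s θ with hBdef
  set C : ℝ → Fin d → ℝ := fun s => ∫ θ in s..L, wf Z x2 U3 s θ with hCdef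
  have hBc : Continuous B := cont_param (f := fun s θ => wf Z x2 U2 s θ) hw2
    continuous_const continuous_id
  have hCc : Continuous C := cont_param (f := fun s θ => wf Z x2 U3 s θ) hw3
    continuous_id continuous_const
  -- step 1 : expansion
  have hexp : ∀ s : ℝ, (a + B s + C s) ⬝ᵥ (a + B s + C s)
      = a ⬝ᵥ a + 2 * (a ⬝ᵥ B s + a ⬝ᵥ C s)
        + (B s ⬝ᵥ B s + B s ⬝ᵥ C s + C s ⬝ᵥ B s + C s ⬝ᵥ C s) := by
    intro s
    simp only [dotProduct_add, add_dotProduct]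
    rw [dotProduct_comm (B s) a, dotProduct_comm (C s) a]
    ring
  have hsplit : (∫ s in (0:ℝ)..L, (a + B s + C s) ⬝ᵥ (a + B s + C s))
      = (∫ _ in (0:ℝ)..L, a ⬝ᵥ a)
        + 2 * ((∫ s in (0:ℝ)..L, a ⬝ᵥ B s) + ∫ s in (0:ℝ)..L, a ⬝ᵥ C s)
        + ((∫ s in (0:ℝ)..L, B s ⬝ᵥ B s) + (∫ s in (0:ℝ)..L, B s ⬝ᵥ C s)
          + (∫ s in (0:ℝ)..L, C s ⬝ᵥ B s) + ∫ s in (0:ℝ)..L, C s ⬝ᵥ C s) := by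
    have cab : Continuous fun s : ℝ => a ⬝ᵥ B s := continuous_const.dotProduct hBc
    have cac : Continuous fun s : ℝ => a ⬝ᵥ C s := continuous_const.dotProduct hCc
    have c1 : Continuous fun s : ℝ => a ⬝ᵥ B s + a ⬝ᵥ C s := cab.add cac
    have cBB : Continuous fun s => B s ⬝ᵥ B s := hBc.dotProduct hBc
    have cBC : Continuous fun s => B s ⬝ᵥ C s := hBc.dotProduct hCc
    have cCB : Continuous fun s => C s ⬝ᵥ B s := hCc.dotProduct hBc
    have cCC : Continuous fun s => C s ⬝ᵥ C s := hCc.dotProduct hCc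
    rw [intervalIntegral.integral_congr (g := fun s => a ⬝ᵥ a + 2 * (a ⬝ᵥ B s + a ⬝ᵥ C s)
      + (B s ⬝ᵥ B s + B s ⬝ᵥ C s + C s ⬝ᵥ B s + C s ⬝ᵥ C s)) (fun s _ => hexp s)]
    rw [intervalIntegral.integral_add (f := fun s => a ⬝ᵥ a + 2 * (a ⬝ᵥ B s + a ⬝ᵥ C s))
      (g := fun s => B s ⬝ᵥ B s + B s ⬝ᵥ C s + C s ⬝ᵥ B s + C s ⬝ᵥ C s)
      ((continuous_const.add (continuous_const.mul c1)).intervalIntegrable 0 L)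
      ((((cBB.add cBC).add cCB).add cCC).intervalIntegrable 0 L)]
    rw [intervalIntegral.integral_add (f := fun _ => a ⬝ᵥ a)
      (g := fun s => 2 * (a ⬝ᵥ B s + a ⬝ᵥ C s)) (continuous_const.intervalIntegrable 0 L)
      ((continuous_const.mul c1).intervalIntegrable 0 L)]
    rw [intervalIntegral.integral_const_mul]
    rw [intervalIntegral.integral_add (f := fun s => B s ⬝ᵥ B s + B s ⬝ᵥ C s + C s ⬝ᵥ B s)
      (g := fun s => C s ⬝ᵥ C s) (((cBB.add cBC).add cCB).intervalIntegrable 0 L)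
      (cCC.intervalIntegrable 0 L)]
    rw [intervalIntegral.integral_add (f := fun s => B s ⬝ᵥ B s + B s ⬝ᵥ C s)
      (g := fun s => C s ⬝ᵥ B s) ((cBB.add cBC).intervalIntegrable 0 L)
      (cCB.intervalIntegrable 0 L)]
    rw [intervalIntegral.integral_add (f := fun s => B s ⬝ᵥ B s)
      (g := fun s => B s ⬝ᵥ C s) (cBB.intervalIntegrable 0 L)
      (cBC.intervalIntegrable 0 L)]
    rw [intervalIntegral.integral_add (cab.intervalIntegrable 0 L)
      (cac.intervalIntegrable 0 L)]
  -- constant term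
  have hI1 : (∫ _ in (0:ℝ)..L, a ⬝ᵥ a) = L * (x1 ⬝ᵥ ((U1ᵀ * U1) *ᵥ x1)) := by
    rw [intervalIntegral.integral_const, sub_zero, smul_eq_mul, ha, mv_dot_mv]
  -- linear term
  have cQ2 : Continuous fun θ => ∫ s in θ..L, (U1ᵀ * U2) * Z s θ :=
    cont_param (f := fun θ s => (U1ᵀ * U2) * Z s θ)
      (continuous_const.matrix_mul (hZ.comp (continuous_snd.prodMk continuous_fst)))
      continuous_id continuous_const
  have cQ3 : Continuous fun θ => ∫ s in (0:ℝ)..θ, (U1ᵀ * U3) * Z s θ :=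
    cont_param (f := fun θ s => (U1ᵀ * U3) * Z s θ)
      (continuous_const.matrix_mul (hZ.comp (continuous_snd.prodMk continuous_fst)))
      continuous_const continuous_id
  have hI2 : ((∫ s in (0:ℝ)..L, a ⬝ᵥ B s) + ∫ s in (0:ℝ)..L, a ⬝ᵥ C s)
      = x1 ⬝ᵥ ∫ θ in (0:ℝ)..L,
          ((∫ s in θ..L, (U1ᵀ * U2) * Z s θ) + ∫ s in (0:ℝ)..θ, (U1ᵀ * U3) * Z s θ) *ᵥ x2 θ := by
    rw [show (∫ s in (0:ℝ)..L, a ⬝ᵥ B s) = ∫ s in (0:ℝ)..L, (U1 *ᵥ x1) ⬝ᵥ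
        ∫ θ in (0:ℝ)..s, wf Z x2 U2 s θ from rfl]
    rw [show (∫ s in (0:ℝ)..L, a ⬝ᵥ C s) = ∫ s in (0:ℝ)..L, (U1 *ᵥ x1) ⬝ᵥ
        ∫ θ in s..L, wf Z x2 U3 s θ from rfl]
    rw [lemAB hL hZ hx2 U1 U2 x1, lemAC hL hZ hx2 U1 U3 x1]
    rw [dot_integral x1 (f := fun θ => ((∫ s in θ..L, (U1ᵀ * U2) * Z s θ)
        + ∫ s in (0:ℝ)..θ, (U1ᵀ * U3) * Z s θ) *ᵥ x2 θ)
      (((cQ2.add cQ3).matrix_mulVec hx2).intervalIntegrable 0 L)]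
    rw [← intervalIntegral.integral_add
      ((continuous_const.dotProduct (cQ2.matrix_mulVec hx2)).intervalIntegrable 0 L)
      ((continuous_const.dotProduct (cQ3.matrix_mulVec hx2)).intervalIntegrable 0 L)]
    refine intervalIntegral.integral_congr fun θ _ => ?_
    rw [Matrix.add_mulVec, dotProduct_add]
  -- matrix kernel continuity
  have hzz : ∀ W : Matrix (Fin d₂) (Fin d₂) ℝ,
      Continuous fun q : (ℝ × ℝ) × ℝ => (Z q.2 q.1.1)ᵀ * W * Z q.2 q.1.2 := fun W =>
    ((hZ.comp (show Continuous fun q : (ℝ × ℝ) × ℝ => ((q.2, q.1.1) : ℝ × ℝ)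
      by fun_prop)).matrix_transpose.matrix_mul continuous_const).matrix_mul
      (hZ.comp (show Continuous fun q : (ℝ × ℝ) × ℝ => ((q.2, q.1.2) : ℝ × ℝ) by fun_prop))
  have hT3 : (∫ s in (0:ℝ)..L, ∫ θ in (0:ℝ)..s,
          x2 s ⬝ᵥ ((∫ β in s..L, (Z β s)ᵀ * (U2ᵀ * U2) * Z β θ) *ᵥ x2 θ))
        + (∫ s in (0:ℝ)..L, ∫ θ in (0:ℝ)..s,
          x2 s ⬝ᵥ ((∫ β in θ..s, (Z β s)ᵀ * (U3ᵀ * U2) * Z β θ) *ᵥ x2 θ))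
        + (∫ s in (0:ℝ)..L, ∫ θ in (0:ℝ)..s,
          x2 s ⬝ᵥ ((∫ β in (0:ℝ)..θ, (Z β s)ᵀ * (U3ᵀ * U3) * Z β θ) *ᵥ x2 θ))
      = ∫ s in (0:ℝ)..L, ∫ θ in (0:ℝ)..s, x2 s ⬝ᵥ
          (((∫ β in s..L, (Z β s)ᵀ * (U2ᵀ * U2) * Z β θ)
            + (∫ β in θ..s, (Z β s)ᵀ * (U3ᵀ * U2) * Z β θ)
            + ∫ β in (0:ℝ)..θ, (Z β s)ᵀ * (U3ᵀ * U3) * Z β θ) *ᵥ x2 θ) :=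
    combine3
      (M1 := fun s θ => ∫ β in s..L, (Z β s)ᵀ * (U2ᵀ * U2) * Z β θ)
      (M2 := fun s θ => ∫ β in θ..s, (Z β s)ᵀ * (U3ᵀ * U2) * Z β θ)
      (M3 := fun s θ => ∫ β in (0:ℝ)..θ, (Z β s)ᵀ * (U3ᵀ * U3) * Z β θ)
      (cont_param (f := fun (p : ℝ × ℝ) β => (Z β p.1)ᵀ * (U2ᵀ * U2) * Z β p.2) (hzz _)
        continuous_fst continuous_const)
      (cont_param (f := fun (p : ℝ × ℝ) β => (Z β p.1)ᵀ * (U3ᵀ * U2) * Z β p.2) (hzz _)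
        continuous_snd continuous_fst)
      (cont_param (f := fun (p : ℝ × ℝ) β => (Z β p.1)ᵀ * (U3ᵀ * U3) * Z β p.2) (hzz _)
        continuous_const continuous_snd)
      hx2 continuous_const continuous_id
  have hT4 : (∫ s in (0:ℝ)..L, ∫ θ in s..L,
          x2 s ⬝ᵥ ((∫ β in θ..L, (Z β s)ᵀ * (U2ᵀ * U2) * Z β θ) *ᵥ x2 θ))
        + (∫ s in (0:ℝ)..L, ∫ θ in s..L,
          x2 s ⬝ᵥ ((∫ β in s..θ, (Z β s)ᵀ * (U2ᵀ * U3) * Z β θ) *ᵥ x2 θ))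
        + (∫ s in (0:ℝ)..L, ∫ θ in s..L,
          x2 s ⬝ᵥ ((∫ β in (0:ℝ)..s, (Z β s)ᵀ * (U3ᵀ * U3) * Z β θ) *ᵥ x2 θ))
      = ∫ s in (0:ℝ)..L, ∫ θ in s..L, x2 s ⬝ᵥ
          (((∫ β in θ..L, (Z β s)ᵀ * (U2ᵀ * U2) * Z β θ)
            + (∫ β in s..θ, (Z β s)ᵀ * (U2ᵀ * U3) * Z β θ)
            + ∫ β in (0:ℝ)..s, (Z β s)ᵀ * (U3ᵀ * U3) * Z β θ) *ᵥ x2 θ) :=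
    combine3
      (M1 := fun s θ => ∫ β in θ..L, (Z β s)ᵀ * (U2ᵀ * U2) * Z β θ)
      (M2 := fun s θ => ∫ β in s..θ, (Z β s)ᵀ * (U2ᵀ * U3) * Z β θ)
      (M3 := fun s θ => ∫ β in (0:ℝ)..s, (Z β s)ᵀ * (U3ᵀ * U3) * Z β θ)
      (cont_param (f := fun (p : ℝ × ℝ) β => (Z β p.1)ᵀ * (U2ᵀ * U2) * Z β p.2) (hzz _)
        continuous_snd continuous_const)
      (cont_param (f := fun (p : ℝ × ℝ) β => (Z β p.1)ᵀ * (U2ᵀ * U3) * Z β p.2) (hzz _)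
        continuous_fst continuous_snd)
      (cont_param (f := fun (p : ℝ × ℝ) β => (Z β p.1)ᵀ * (U3ᵀ * U3) * Z β p.2) (hzz _)
        continuous_const continuous_fst)
      hx2 continuous_id continuous_const
  -- assemble
  rw [hsplit, hI1, hI2]
  rw [show (∫ s in (0:ℝ)..L, B s ⬝ᵥ B s) = ∫ s in (0:ℝ)..L,
      (∫ t in (0:ℝ)..s, wf Z x2 U2 s t) ⬝ᵥ ∫ θ in (0:ℝ)..s, wf Z x2 U2 s θ from rfl]
  rw [show (∫ s in (0:ℝ)..L, B s ⬝ᵥ C s) = ∫ s in (0:ℝ)..L,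
      (∫ t in (0:ℝ)..s, wf Z x2 U2 s t) ⬝ᵥ ∫ θ in s..L, wf Z x2 U3 s θ from rfl]
  rw [show (∫ s in (0:ℝ)..L, C s ⬝ᵥ B s) = ∫ s in (0:ℝ)..L,
      (∫ t in s..L, wf Z x2 U3 s t) ⬝ᵥ ∫ θ in (0:ℝ)..s, wf Z x2 U2 s θ from rfl]
  rw [show (∫ s in (0:ℝ)..L, C s ⬝ᵥ C s) = ∫ s in (0:ℝ)..L,
      (∫ t in s..L, wf Z x2 U3 s t) ⬝ᵥ ∫ θ in s..L, wf Z x2 U3 s θ from rfl]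
  rw [lemBB hL hZ hx2 U2, lemBC hL hZ hx2 U2 U3, lemCB hL hZ hx2 U2 U3, lemCC hL hZ hx2 U3]
  rw [← hT3, ← hT4]
  ring
end corethm

/-- `(M, N₁, N₂)` is given by the `(Z₁, Z, T)` positivity formulas (Theorem 6). -/
def PosFormulas (n d₁ d₂ : ℕ) (L : ℝ)
    (Z1 : ℝ → Matrix (Fin d₁) (Fin n) ℝ) (Z : ℝ → ℝ → Matrix (Fin d₂) (Fin n) ℝ)
    (T : Matrix (Fin d₁ ⊕ (Fin d₂ ⊕ Fin d₂)) (Fin d₁ ⊕ (Fin d₂ ⊕ Fin d₂)) ℝ)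
    (M : ℝ → Matrix (Fin n) (Fin n) ℝ) (N1 N2 : ℝ → ℝ → Matrix (Fin n) (Fin n) ℝ) : Prop :=
  (∀ s : ℝ, M s = (Z1 s)ᵀ * T.submatrix Sum.inl Sum.inl * Z1 s) ∧
  (∀ s θ : ℝ, θ ≤ s →
    N1 s θ = (Z1 s)ᵀ * T.submatrix Sum.inl (Sum.inr ∘ Sum.inl) * Z s θ
      + (Z θ s)ᵀ * T.submatrix (Sum.inr ∘ Sum.inr) Sum.inl * Z1 θ
      + (∫ β in s..L, (Z β s)ᵀ * T.submatrix (Sum.inr ∘ Sum.inl) (Sum.inr ∘ Sum.inl) * Z β θ)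
      + (∫ β in θ..s, (Z β s)ᵀ * T.submatrix (Sum.inr ∘ Sum.inr) (Sum.inr ∘ Sum.inl) * Z β θ)
      + ∫ β in (0:ℝ)..θ,
          (Z β s)ᵀ * T.submatrix (Sum.inr ∘ Sum.inr) (Sum.inr ∘ Sum.inr) * Z β θ) ∧
  (∀ s θ : ℝ, s ≤ θ → N2 s θ = (N1 θ s)ᵀ)

/-- `(P̂, Q, R₁, R₂)` is given by the `(Z, T)` joint positivity formulas (Theorem 7). -/
def JointFormulas (n m d₂ : ℕ) (L : ℝ)
    (Z : ℝ → ℝ → Matrix (Fin d₂) (Fin n) ℝ)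
    (T : Matrix (Fin m ⊕ (Fin d₂ ⊕ Fin d₂)) (Fin m ⊕ (Fin d₂ ⊕ Fin d₂)) ℝ)
    (Ph : Matrix (Fin m) (Fin m) ℝ) (Q : ℝ → Matrix (Fin m) (Fin n) ℝ)
    (R1 R2 : ℝ → ℝ → Matrix (Fin n) (Fin n) ℝ) : Prop :=
  Ph = T.submatrix Sum.inl Sum.inl ∧
  (∀ θ : ℝ, Q θ = (∫ s in θ..L, T.submatrix Sum.inl (Sum.inr ∘ Sum.inl) * Z s θ)
      + ∫ s in (0:ℝ)..θ, T.submatrix Sum.inl (Sum.inr ∘ Sum.inr) * Z s θ) ∧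
  (∀ s θ : ℝ, θ ≤ s →
    R1 s θ = (∫ β in s..L, (Z β s)ᵀ * T.submatrix (Sum.inr ∘ Sum.inl) (Sum.inr ∘ Sum.inl) * Z β θ)
      + (∫ β in θ..s, (Z β s)ᵀ * T.submatrix (Sum.inr ∘ Sum.inr) (Sum.inr ∘ Sum.inl) * Z β θ)
      + ∫ β in (0:ℝ)..θ,
          (Z β s)ᵀ * T.submatrix (Sum.inr ∘ Sum.inr) (Sum.inr ∘ Sum.inr) * Z β θ) ∧
  (∀ s θ : ℝ, s ≤ θ →
    R2 s θ = (∫ β in θ..L, (Z β s)ᵀ * T.submatrix (Sum.inr ∘ Sum.inl) (Sum.inr ∘ Sum.inl) * Z β θ)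
      + (∫ β in s..θ, (Z β s)ᵀ * T.submatrix (Sum.inr ∘ Sum.inl) (Sum.inr ∘ Sum.inr) * Z β θ)
      + ∫ β in (0:ℝ)..s,
          (Z β s)ᵀ * T.submatrix (Sum.inr ∘ Sum.inr) (Sum.inr ∘ Sum.inr) * Z β θ)

theorem square_root_factorization_identity
    (n m d d₂ : ℕ) (hn : 1 ≤ n) (hm : 1 ≤ m) (hd : 1 ≤ d) (hd₂ : 1 ≤ d₂)
    (L : ℝ) (hL : 0 < L)
    (Z : ℝ → ℝ → Matrix (Fin d₂) (Fin n) ℝ)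
    (hZ : ContinuousOn (fun p : ℝ × ℝ => Z p.1 p.2) (Set.Icc (0:ℝ) L ×ˢ Set.Icc (0:ℝ) L))
    (U1 : Matrix (Fin d) (Fin m) ℝ) (U2 U3 : Matrix (Fin d) (Fin d₂) ℝ)
    (Ph : Matrix (Fin m) (Fin m) ℝ) (Q : ℝ → Matrix (Fin m) (Fin n) ℝ)
    (R1 R2 : ℝ → ℝ → Matrix (Fin n) (Fin n) ℝ)
    (hPQR : JointFormulas n m d₂ L Z
      ((Matrix.fromCols U1 (Matrix.fromCols U2 U3))ᵀ *
        Matrix.fromCols U1 (Matrix.fromCols U2 U3)) Ph Q R1 R2)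
    (x1 : Fin m → ℝ) (x2 : ℝ → Fin n → ℝ) (hx2 : ContinuousOn x2 (Set.Icc (0:ℝ) L))
    (v : ℝ → Fin d → ℝ)
    (hv : ∀ s : ℝ, v s = U1 *ᵥ x1 + (∫ θ in (0:ℝ)..s, (U2 * Z s θ) *ᵥ x2 θ)
      + ∫ θ in s..L, (U3 * Z s θ) *ᵥ x2 θ) :
    ∫ s in (0:ℝ)..L, v s ⬝ᵥ v s
      = L * (x1 ⬝ᵥ (Ph *ᵥ x1)) + 2 * (x1 ⬝ᵥ ∫ θ in (0:ℝ)..L, Q θ *ᵥ x2 θ)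
        + (∫ s in (0:ℝ)..L, ∫ θ in (0:ℝ)..s, x2 s ⬝ᵥ (R1 s θ *ᵥ x2 θ))
        + ∫ s in (0:ℝ)..L, ∫ θ in s..L, x2 s ⬝ᵥ (R2 s θ *ᵥ x2 θ) := by
  have hL' : (0:ℝ) ≤ L := hL.le
  haveI : TietzeExtension.{0,0} (Matrix (Fin d₂) (Fin n) ℝ) := TietzeExtension.of_tvs ℝ
  obtain ⟨Zg, hZgc, hZg⟩ := myExt (isClosed_Icc.prod isClosed_Icc) hZ
  obtain ⟨y2, hy2c, hy2⟩ := myExt isClosed_Icc hx2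
  set Z2 : ℝ → ℝ → Matrix (Fin d₂) (Fin n) ℝ := fun s θ => Zg (s, θ) with hZ2def
  have hZ2c : Continuous fun p : ℝ × ℝ => Z2 p.1 p.2 :=
    hZgc.comp (continuous_fst.prodMk continuous_snd)
  have hZeq : ∀ {s θ : ℝ}, s ∈ Set.Icc (0:ℝ) L → θ ∈ Set.Icc (0:ℝ) L → Z s θ = Z2 s θ :=
    fun {s θ} hs hθ => (hZg (s, θ) ⟨hs, hθ⟩).symm
  have hxeq : ∀ {θ : ℝ}, θ ∈ Set.Icc (0:ℝ) L → x2 θ = y2 θ :=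
    fun {θ} hθ => (hy2 θ hθ).symm
  obtain ⟨hPh, hQ, hR1, hR2⟩ := hPQR
  have key := core hL' hZ2c hy2c U1 U2 U3 x1
  have e1 : (∫ s in (0:ℝ)..L, v s ⬝ᵥ v s) = ∫ s in (0:ℝ)..L,
      (U1 *ᵥ x1 + (∫ θ in (0:ℝ)..s, wf Z2 y2 U2 s θ) + ∫ θ in s..L, wf Z2 y2 U3 s θ) ⬝ᵥ
      (U1 *ᵥ x1 + (∫ θ in (0:ℝ)..s, wf Z2 y2 U2 s θ) + ∫ θ in s..L, wf Z2 y2 U3 s θ) := by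
    refine intervalIntegral.integral_congr fun s hs => ?_
    rw [Set.uIcc_of_le hL'] at hs
    have hvs : v s = U1 *ᵥ x1 + (∫ θ in (0:ℝ)..s, wf Z2 y2 U2 s θ)
        + ∫ θ in s..L, wf Z2 y2 U3 s θ := by
      rw [hv s]
      congr 1
      · congr 1
        refine intervalIntegral.integral_congr fun θ hθ => ?_
        rw [Set.uIcc_of_le hs.1] at hθ
        show (U2 * Z s θ) *ᵥ x2 θ = (U2 * Z2 s θ) *ᵥ y2 θ
        rw [hZeq hs ⟨hθ.1, hθ.2.trans hs.2⟩, hxeq ⟨hθ.1, hθ.2.trans hs.2⟩]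
      · refine intervalIntegral.integral_congr fun θ hθ => ?_
        rw [Set.uIcc_of_le hs.2] at hθ
        show (U3 * Z s θ) *ᵥ x2 θ = (U3 * Z2 s θ) *ᵥ y2 θ
        rw [hZeq hs ⟨hs.1.trans hθ.1, hθ.2⟩, hxeq ⟨hs.1.trans hθ.1, hθ.2⟩]
    rw [hvs]
  have e2 : x1 ⬝ᵥ (Ph *ᵥ x1) = x1 ⬝ᵥ ((U1ᵀ * U1) *ᵥ x1) := by rw [hPh, T11]
  have e3 : (∫ θ in (0:ℝ)..L, Q θ *ᵥ x2 θ) = ∫ θ in (0:ℝ)..L,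
      ((∫ s in θ..L, (U1ᵀ * U2) * Z2 s θ) + ∫ s in (0:ℝ)..θ, (U1ᵀ * U3) * Z2 s θ) *ᵥ y2 θ := by
    refine intervalIntegral.integral_congr fun θ hθ => ?_
    rw [Set.uIcc_of_le hL'] at hθ
    have b1 : (∫ s in θ..L, (U1ᵀ * U2) * Z s θ) = ∫ s in θ..L, (U1ᵀ * U2) * Z2 s θ := by
      refine intervalIntegral.integral_congr fun s hs => ?_
      rw [Set.uIcc_of_le hθ.2] at hs
      rw [hZeq ⟨hθ.1.trans hs.1, hs.2⟩ hθ]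
    have b2 : (∫ s in (0:ℝ)..θ, (U1ᵀ * U3) * Z s θ)
        = ∫ s in (0:ℝ)..θ, (U1ᵀ * U3) * Z2 s θ := by
      refine intervalIntegral.integral_congr fun s hs => ?_
      rw [Set.uIcc_of_le hθ.1] at hs
      rw [hZeq ⟨hs.1, hs.2.trans hθ.2⟩ hθ]
    rw [hQ θ, T12, T13, hxeq hθ, b1, b2]
  have e4 : (∫ s in (0:ℝ)..L, ∫ θ in (0:ℝ)..s, x2 s ⬝ᵥ (R1 s θ *ᵥ x2 θ))
      = ∫ s in (0:ℝ)..L, ∫ θ in (0:ℝ)..s, y2 s ⬝ᵥ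
          (((∫ β in s..L, (Z2 β s)ᵀ * (U2ᵀ * U2) * Z2 β θ)
            + (∫ β in θ..s, (Z2 β s)ᵀ * (U3ᵀ * U2) * Z2 β θ)
            + ∫ β in (0:ℝ)..θ, (Z2 β s)ᵀ * (U3ᵀ * U3) * Z2 β θ) *ᵥ y2 θ) := by
    refine intervalIntegral.integral_congr fun s hs => ?_
    rw [Set.uIcc_of_le hL'] at hs
    refine intervalIntegral.integral_congr fun θ hθ => ?_
    rw [Set.uIcc_of_le hs.1] at hθ
    have hθL : θ ∈ Set.Icc (0:ℝ) L := ⟨hθ.1, hθ.2.trans hs.2⟩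
    have b1 : (∫ β in s..L, (Z β s)ᵀ * (U2ᵀ * U2) * Z β θ)
        = ∫ β in s..L, (Z2 β s)ᵀ * (U2ᵀ * U2) * Z2 β θ := by
      refine intervalIntegral.integral_congr fun β hβ => ?_
      rw [Set.uIcc_of_le hs.2] at hβ
      rw [hZeq ⟨hs.1.trans hβ.1, hβ.2⟩ hs, hZeq ⟨hs.1.trans hβ.1, hβ.2⟩ hθL]
    have b2 : (∫ β in θ..s, (Z β s)ᵀ * (U3ᵀ * U2) * Z β θ)
        = ∫ β in θ..s, (Z2 β s)ᵀ * (U3ᵀ * U2) * Z2 β θ := by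
      refine intervalIntegral.integral_congr fun β hβ => ?_
      rw [Set.uIcc_of_le hθ.2] at hβ
      have hβL : β ∈ Set.Icc (0:ℝ) L := ⟨hθ.1.trans hβ.1, hβ.2.trans hs.2⟩
      rw [hZeq hβL hs, hZeq hβL hθL]
    have b3 : (∫ β in (0:ℝ)..θ, (Z β s)ᵀ * (U3ᵀ * U3) * Z β θ)
        = ∫ β in (0:ℝ)..θ, (Z2 β s)ᵀ * (U3ᵀ * U3) * Z2 β θ := by
      refine intervalIntegral.integral_congr fun β hβ => ?_
      rw [Set.uIcc_of_le hθ.1] at hβ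
      have hβL : β ∈ Set.Icc (0:ℝ) L := ⟨hβ.1, hβ.2.trans hθL.2⟩
      rw [hZeq hβL hs, hZeq hβL hθL]
    rw [hR1 s θ hθ.2, T22, T32, T33, hxeq hs, hxeq hθL, b1, b2, b3]
  have e5 : (∫ s in (0:ℝ)..L, ∫ θ in s..L, x2 s ⬝ᵥ (R2 s θ *ᵥ x2 θ))
      = ∫ s in (0:ℝ)..L, ∫ θ in s..L, y2 s ⬝ᵥ
          (((∫ β in θ..L, (Z2 β s)ᵀ * (U2ᵀ * U2) * Z2 β θ)
            + (∫ β in s..θ, (Z2 β s)ᵀ * (U2ᵀ * U3) * Z2 β θ)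
            + ∫ β in (0:ℝ)..s, (Z2 β s)ᵀ * (U3ᵀ * U3) * Z2 β θ) *ᵥ y2 θ) := by
    refine intervalIntegral.integral_congr fun s hs => ?_
    rw [Set.uIcc_of_le hL'] at hs
    refine intervalIntegral.integral_congr fun θ hθ => ?_
    rw [Set.uIcc_of_le hs.2] at hθ
    have hθL : θ ∈ Set.Icc (0:ℝ) L := ⟨hs.1.trans hθ.1, hθ.2⟩
    have b1 : (∫ β in θ..L, (Z β s)ᵀ * (U2ᵀ * U2) * Z β θ)
        = ∫ β in θ..L, (Z2 β s)ᵀ * (U2ᵀ * U2) * Z2 β θ := by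
      refine intervalIntegral.integral_congr fun β hβ => ?_
      rw [Set.uIcc_of_le hθL.2] at hβ
      have hβL : β ∈ Set.Icc (0:ℝ) L := ⟨hθL.1.trans hβ.1, hβ.2⟩
      rw [hZeq hβL hs, hZeq hβL hθL]
    have b2 : (∫ β in s..θ, (Z β s)ᵀ * (U2ᵀ * U3) * Z β θ)
        = ∫ β in s..θ, (Z2 β s)ᵀ * (U2ᵀ * U3) * Z2 β θ := by
      refine intervalIntegral.integral_congr fun β hβ => ?_
      rw [Set.uIcc_of_le hθ.1] at hβ
      have hβL : β ∈ Set.Icc (0:ℝ) L := ⟨hs.1.trans hβ.1, hβ.2.trans hθL.2⟩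
      rw [hZeq hβL hs, hZeq hβL hθL]
    have b3 : (∫ β in (0:ℝ)..s, (Z β s)ᵀ * (U3ᵀ * U3) * Z β θ)
        = ∫ β in (0:ℝ)..s, (Z2 β s)ᵀ * (U3ᵀ * U3) * Z2 β θ := by
      refine intervalIntegral.integral_congr fun β hβ => ?_
      rw [Set.uIcc_of_le hs.1] at hβ
      have hβL : β ∈ Set.Icc (0:ℝ) L := ⟨hβ.1, hβ.2.trans hs.2⟩
      rw [hZeq hβL hs, hZeq hβL hθL]
    rw [hR2 s θ hθ.1, T22, T23, T33, hxeq hs, hxeq hθL, b1, b2, b3]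
  rw [e2, e3, e4, e5]
  exact e1.trans key
end
end
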